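/- arXiv:2304.06864 — 2 statements merged into one kernel-verified Lean document; each statement's English description precedes it below -/
import Mathlib

section
/- Two signed graphs Γ and Γ' on the same underlying connected graph G are switching equivalent if and only if they have the same set of negative cycles. -/
open scoped Classical
open Polynomial

structure SignedGraph (V : Type*) where
  G : SimpleGraph V
  sgn : V → V → ℤ
  symm : ∀ u v, sgn u v = sgn v u
  pm : ∀ u v, G.Adj u v → sgn u v = 1 ∨ sgn u v = -1
  zero : ∀ u v, ¬ G.Adj u v → sgn u v = 0

namespace SignedGraph

variable {V : Type*}

/-- The (real) adjacency matrix of a signed graph. -/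
noncomputable def adjMatrix [Fintype V] (Γ : SignedGraph V) : Matrix V V ℝ :=
  fun u v => (Γ.sgn u v : ℝ)

/-- Switching with respect to a vertex subset `U`. -/
noncomputable def switch (Γ : SignedGraph V) (U : Set V) : SignedGraph V where
  G := Γ.G
  sgn u v := if ((u ∈ U) ↔ (v ∈ U)) then Γ.sgn u v else -Γ.sgn u v
  symm u v := by
    try dsimp only
    by_cases h : (u ∈ U) ↔ (v ∈ U)
    · rw [if_pos h, if_pos (Iff.symm h), Γ.symm u v]
    · rw [if_neg h, if_neg (fun hh => h (Iff.symm hh)), Γ.symm u v]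
  pm u v hadj := by
    by_cases h : (u ∈ U) ↔ (v ∈ U)
    · simpa [h] using Γ.pm u v hadj
    · rcases Γ.pm u v hadj with h1 | h1 <;> simp [h, h1]
  zero u v hadj := by
    by_cases h : (u ∈ U) ↔ (v ∈ U) <;> simp [h, Γ.zero u v hadj]

/-- The sign function on unordered pairs. -/
def sgnE (Γ : SignedGraph V) : Sym2 V → ℤ := Sym2.lift ⟨Γ.sgn, Γ.symm⟩

/-- The spectrum of `Γ` is symmetric with respect to the origin. -/
def SymmetricSpectrum [Fintype V] [DecidableEq V] (Γ : SignedGraph V) : Prop :=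
  ∀ x : ℝ, Γ.adjMatrix.charpoly.rootMultiplicity x =
    Γ.adjMatrix.charpoly.rootMultiplicity (-x)


section Aux

variable {G : SimpleGraph V}




lemma prod_pm (l : List ℤ) (h : ∀ x ∈ l, x = 1 ∨ x = -1) : l.prod = 1 ∨ l.prod = -1 := by
  induction l with
  | nil => simp
  | cons a t ih =>
    rcases h a (by simp) with h1 | h1 <;>
      rcases ih (fun x hx => h x (by simp [hx])) with h2 | h2 <;> simp [h1, h2]

lemma pos_length_of_mem_support_tail {a b y : V} (q : G.Walk a b)
    (h : y ∈ q.support.tail) : 0 < q.length := by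
  cases q with
  | nil => simp at h
  | cons h p => simp

lemma split_aux {x : V} (w : G.Walk x x) (hcount : 2 ≤ w.support.tail.count x) :
    ∃ (w1 w2 : G.Walk x x), w1.length < w.length ∧ w2.length < w.length ∧
      w.edges = w1.edges ++ w2.edges := by
  cases w with
  | nil => simp at hcount
  | cons h p =>
    rename_i y
    have hcp : 2 ≤ p.support.count x := by
      simpa [SimpleGraph.Walk.support_cons] using hcount
    have hxp : x ∈ p.support := by
      rw [← List.count_pos_iff]; omega
    have hspec := p.take_spec hxp
    have hlen : (p.takeUntil x hxp).length + (p.dropUntil x hxp).length = p.length := by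
      have h' := congr_arg SimpleGraph.Walk.length hspec
      rwa [SimpleGraph.Walk.length_append] at h'
    have hdrop : 0 < (p.dropUntil x hxp).length := by
      have hsupp : p.support = (p.takeUntil x hxp).support ++ (p.dropUntil x hxp).support.tail := by
        have h' := congr_arg SimpleGraph.Walk.support hspec
        rw [SimpleGraph.Walk.support_append] at h'
        exact h'.symm
      have h1 : (p.takeUntil x hxp).support.count x = 1 :=
        p.count_support_takeUntil_eq_one hxp
      have h2 : 1 ≤ (p.dropUntil x hxp).support.tail.count x := by
        rw [hsupp, List.count_append] at hcp; omega
      have hx2 : x ∈ (p.dropUntil x hxp).support.tail := by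
        rw [← List.count_pos_iff]; omega
      exact pos_length_of_mem_support_tail _ hx2
    refine ⟨SimpleGraph.Walk.cons h (p.takeUntil x hxp), p.dropUntil x hxp, ?_, ?_, ?_⟩
    · simp only [SimpleGraph.Walk.length_cons]; omega
    · simp only [SimpleGraph.Walk.length_cons]; omega
    · rw [SimpleGraph.Walk.edges_cons, SimpleGraph.Walk.edges_cons, List.cons_append,
        ← SimpleGraph.Walk.edges_append, hspec]


lemma closed_walk_prod (τ : Sym2 V → ℤ)
    (hτ : ∀ e ∈ G.edgeSet, τ e * τ e = 1)
    (hcy : ∀ (u : V) (w : G.Walk u u), w.IsCycle → (w.edges.map τ).prod = 1) :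
    ∀ (n : ℕ) (u : V) (w : G.Walk u u), w.length ≤ n → (w.edges.map τ).prod = 1 := by
  intro n
  induction n with
  | zero =>
    intro u w hw
    cases w with
    | nil => simp
    | cons h p => simp at hw
  | succ n ih =>
    intro u w hw
    by_cases hnd : w.support.tail.Nodup
    · cases w with
      | nil => simp
      | cons h p =>
        rename_i v
        have hps : p.support.Nodup := by
          simpa [SimpleGraph.Walk.support_cons] using hnd
        have hp : p.IsPath := by rw [SimpleGraph.Walk.isPath_def]; exact hps
        by_cases he : s(u, v) ∈ p.edges
        · -- p must be the single edge from v to u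
          cases p with
          | nil => simp at he
          | cons h' p'' =>
            rename_i y
            rw [SimpleGraph.Walk.edges_cons] at he
            rcases List.mem_cons.mp he with hc1 | hc2
            · have huy : u = y := by
                rcases Sym2.eq_iff.mp hc1 with ⟨h1, h2⟩ | ⟨h1, h2⟩
                · exact absurd h1 h.ne
                · exact h1
              subst huy
              have hp'' : p''.IsPath := hp.of_cons
              have : p'' = SimpleGraph.Walk.nil :=
                SimpleGraph.Walk.isPath_iff_eq_nil.mp hp''
              subst this
              have hes : s(v, u) = s(u, v) := Sym2.eq_swap
              have he' : s(u, v) ∈ G.edgeSet := h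
              simp [hes]
              have := hτ _ he'
              linarith [hτ _ he']
            · have hvs : v ∈ p''.support :=
                SimpleGraph.Walk.snd_mem_support_of_mem_edges _ hc2
              have : v ∉ p''.support := by
                have := hp.support_nodup
                simp [SimpleGraph.Walk.support_cons] at this
                exact this.1
              exact absurd hvs this
        · have hcyc : (SimpleGraph.Walk.cons h p).IsCycle :=
            (SimpleGraph.Walk.cons_isCycle_iff p h).mpr ⟨hp, he⟩
          exact hcy u _ hcyc
    · obtain ⟨x, hx⟩ := List.exists_duplicate_iff_not_nodup.mpr hnd
      have hxcount : 2 ≤ w.support.tail.count x := List.duplicate_iff_two_le_count.mp hx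
      have hxs : x ∈ w.support := by
        apply List.mem_of_mem_tail
        rw [← List.count_pos_iff]; omega
      have hrot := w.rotate_edges x hxs
      have hperm : ((w.rotate x hxs).edges.map τ).prod = (w.edges.map τ).prod :=
        (hrot.perm.map τ).prod_eq
      have hlrot : (w.rotate x hxs).length = w.length := by
        rw [← SimpleGraph.Walk.length_edges, ← SimpleGraph.Walk.length_edges]
        exact hrot.perm.length_eq
      have hcount' : 2 ≤ (w.rotate x hxs).support.tail.count x := by
        rw [((SimpleGraph.Walk.support_rotate w x hxs).perm.count_eq x)]
        exact hxcount
      obtain ⟨w1, w2, hl1, hl2, hedges⟩ := split_aux (w.rotate x hxs) hcount'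
      rw [← hperm, hedges, List.map_append, List.prod_append,
        ih x w1 (by omega), ih x w2 (by omega), one_mul]


end Aux

lemma sgnE_mk (Γ : SignedGraph V) (a b : V) : Γ.sgnE s(a, b) = Γ.sgn a b := rfl

lemma ext' (A B : SignedGraph V) (h1 : A.G = B.G) (h2 : ∀ u v, A.sgn u v = B.sgn u v) :
    A = B := by
  cases A with
  | mk G1 s1 sy1 pm1 z1 =>
    cases B with
    | mk G2 s2 sy2 pm2 z2 =>
      dsimp at h1 h2
      subst h1
      have hs : s1 = s2 := funext fun u => funext fun v => h2 u v
      subst hs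
      rfl

lemma switch_walk_prod (Γ : SignedGraph V) (U : Set V) {a b : V} (w : Γ.G.Walk a b) :
    (w.edges.map (Γ.switch U).sgnE).prod
      = (if a ∈ U then (-1 : ℤ) else 1) * (if b ∈ U then (-1 : ℤ) else 1)
        * (w.edges.map Γ.sgnE).prod := by
  induction w with
  | nil =>
    simp only [SimpleGraph.Walk.edges_nil, List.map_nil, List.prod_nil, mul_one]
    split_ifs <;> norm_num
  | @cons a c b h p ih =>
    simp only [SimpleGraph.Walk.edges_cons, List.map_cons, List.prod_cons]
    rw [ih]
    have hs : (Γ.switch U).sgnE s(a, c)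
        = if ((a ∈ U) ↔ (c ∈ U)) then Γ.sgn a c else -Γ.sgn a c := rfl
    rw [hs]
    simp only [sgnE_mk]
    by_cases ha : a ∈ U <;> by_cases hc : c ∈ U <;> simp [ha, hc]

theorem switching_equiv_iff_same_negative_cycles (Γ Γ' : SignedGraph V)
    (hG : Γ'.G = Γ.G) (hc : Γ.G.Connected) :
    (∃ U : Set V, Γ' = Γ.switch U) ↔
      ∀ (u : V) (w : Γ.G.Walk u u), w.IsCycle →
        ((w.edges.map Γ.sgnE).prod = -1 ↔ (w.edges.map Γ'.sgnE).prod = -1) := by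
  constructor
  · rintro ⟨U, rfl⟩ u w hw
    have hsq : (if u ∈ U then (-1 : ℤ) else 1) * (if u ∈ U then (-1 : ℤ) else 1) = 1 := by
      by_cases h : u ∈ U <;> simp [h]
    rw [switch_walk_prod Γ U w, hsq, one_mul]
  · intro H
    have hV : Nonempty V := hc.nonempty
    set τ : Sym2 V → ℤ := fun e => Γ.sgnE e * Γ'.sgnE e with hτdef
    have hτpm : ∀ e ∈ Γ.G.edgeSet, τ e = 1 ∨ τ e = -1 := by
      intro e he
      induction e with
      | h a b =>
        have hadj : Γ.G.Adj a b := he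
        have hadj' : Γ'.G.Adj a b := by rw [hG]; exact hadj
        rcases Γ.pm a b hadj with h1 | h1 <;> rcases Γ'.pm a b hadj' with h2 | h2 <;>
          simp [hτdef, sgnE_mk, h1, h2]
    have hτ : ∀ e ∈ Γ.G.edgeSet, τ e * τ e = 1 := by
      intro e he; rcases hτpm e he with h | h <;> rw [h] <;> norm_num
    have hedgespm : ∀ {a b : V} (p : Γ.G.Walk a b) (Δ : SignedGraph V), Δ.G = Γ.G →
        ∀ x ∈ p.edges.map Δ.sgnE, x = 1 ∨ x = -1 := by
      intro a b p Δ hΔ x hx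
      rcases List.mem_map.mp hx with ⟨e, he, rfl⟩
      have he' : e ∈ Γ.G.edgeSet := p.edges_subset_edgeSet he
      induction e with
      | h c d =>
        have : Δ.G.Adj c d := by rw [hΔ]; exact he'
        exact Δ.pm c d this
    have hcyc1 : ∀ (u : V) (w : Γ.G.Walk u u), w.IsCycle → (w.edges.map τ).prod = 1 := by
      intro u w hw
      have h1 := prod_pm _ (hedgespm w Γ rfl)
      have h2 := prod_pm _ (hedgespm w Γ' hG)
      have heq : (w.edges.map Γ.sgnE).prod = (w.edges.map Γ'.sgnE).prod := by
        rcases h1 with h1 | h1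
        · rcases h2 with h2 | h2
          · rw [h1, h2]
          · exact absurd ((H u w hw).mpr h2) (by rw [h1]; norm_num)
        · rw [h1, (H u w hw).mp h1]
      have : (w.edges.map τ).prod
          = (w.edges.map Γ.sgnE).prod * (w.edges.map Γ'.sgnE).prod := by
        rw [hτdef]; exact List.prod_map_mul
      rw [this, ← heq]
      rcases h1 with h1 | h1 <;> rw [h1] <;> norm_num
    have key : ∀ (u : V) (w : Γ.G.Walk u u), (w.edges.map τ).prod = 1 := fun u w =>
      closed_walk_prod τ hτ hcyc1 w.length u w le_rfl
    obtain ⟨r⟩ := hV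
    set g : V → ℤ := fun v => (((hc.preconnected r v).some).edges.map τ).prod with hgdef
    have hg : ∀ v, g v = 1 ∨ g v = -1 := by
      intro v
      apply prod_pm
      intro x hx
      rcases List.mem_map.mp hx with ⟨e, he, rfl⟩
      exact hτpm e (SimpleGraph.Walk.edges_subset_edgeSet _ he)
    have hedge : ∀ a b, Γ.G.Adj a b → τ s(a, b) = g a * g b := by
      intro a b hab
      set pa := (hc.preconnected r a).some
      set pb := (hc.preconnected r b).some
      have hkey := key r (pa.append (SimpleGraph.Walk.cons hab pb.reverse))
      rw [SimpleGraph.Walk.edges_append, SimpleGraph.Walk.edges_cons,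
        SimpleGraph.Walk.edges_reverse, List.map_append, List.prod_append,
        List.map_cons, List.prod_cons, List.map_reverse, List.prod_reverse] at hkey
      have hga : g a = (pa.edges.map τ).prod := rfl
      have hgb : g b = (pb.edges.map τ).prod := rfl
      rw [← hga, ← hgb] at hkey
      rcases hg a with h1 | h1 <;> rcases hg b with h2 | h2 <;>
        rw [h1, h2] at hkey ⊢ <;> linarith
    refine ⟨{v | g v = -1}, ext' Γ' (Γ.switch {v | g v = -1}) hG ?_⟩
    intro a b
    by_cases hab : Γ.G.Adj a b
    · have ht := hedge a b hab
      have ht' : Γ.sgn a b * Γ'.sgn a b = g a * g b := by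
        rw [hτdef] at ht; simpa [sgnE_mk] using ht
      show Γ'.sgn a b = (Γ.switch {v | g v = -1}).sgn a b
      have hmem : ∀ v : V, (v ∈ {v | g v = -1}) = (g v = -1) := fun v => rfl
      rcases Γ.pm a b hab with h1 | h1 <;> rcases hg a with h2 | h2 <;>
        rcases hg b with h3 | h3 <;>
        simp only [switch, hmem, h2, h3, h1] at ht' ⊢ <;> norm_num at ht' ⊢ <;> linarith
    · have hab' : ¬ Γ'.G.Adj a b := by rw [hG]; exact hab
      show Γ'.sgn a b = (Γ.switch {v | g v = -1}).sgn a b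
      rw [Γ'.zero a b hab']
      simp [switch, Γ.zero a b hab]

end SignedGraph
end

section
/- Let Γ = (G, σ) be a signed graph on a bicyclic graph G whose two fundamental cycles C_1, C_2 (with respect to some spanning tree) are odd. If the deleted subgraphs satisfy M(G − V(C_1), x) = M(G − V(C_2), x) and σ(C_1)σ(C_2) = −1, and C_1, C_2 are the only odd cycles among the 2-regular subgraphs contributing to the odd part, then Γ has a symmetric spectrum. -/
open scoped Classical
open Polynomial

theorem Equiv.Perm.apply_inv_self {α : Type*} (f : Equiv.Perm α) (x : α) : f (f⁻¹ x) = x :=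
  f.apply_symm_apply x

theorem Equiv.Perm.inv_apply_self {α : Type*} (f : Equiv.Perm α) (x : α) : f⁻¹ (f x) = x :=
  f.symm_apply_apply x

namespace SignedGraph

variable {V : Type*}

/-- `B` is a (nonempty) 2-regular subgraph of `G`: a disjoint union of cycles. -/
def IsTwoRegular (Γ : SignedGraph V) (B : Γ.G.Subgraph) : Prop :=
  B.verts.Nonempty ∧ ∀ v ∈ B.verts, (B.neighborSet v).ncard = 2

/-- The product of the signs of all edges of a subgraph. -/
noncomputable def sgnProd (Γ : SignedGraph V) (B : Γ.G.Subgraph) : ℤ :=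
  ∏ᶠ e ∈ B.edgeSet, Γ.sgnE e

/-- The number of connected components of a subgraph. -/
noncomputable def ncomp (Γ : SignedGraph V) (B : Γ.G.Subgraph) : ℕ :=
  Nat.card B.coe.ConnectedComponent

/-- The matching polynomial of the subgraph of `G` induced on the vertex set `s`:
`M(H, x) = ∑ᵢ (-1)^i mᵢ(H) x^(|H| - 2i)`, summing over all matchings. -/
noncomputable def matchingPolyOn [Fintype V] (G : SimpleGraph V) (s : Set V) : Polynomial ℝ :=
  ∑ᶠ t ∈ {t : Finset (Sym2 V) | (↑t : Set (Sym2 V)) ⊆ G.edgeSet ∧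
      (∀ e ∈ t, ∀ v ∈ e, v ∈ s) ∧
      (∀ e ∈ t, ∀ f ∈ t, e ≠ f → ∀ v : V, ¬(v ∈ e ∧ v ∈ f))},
    ((-1 : ℝ) ^ t.card) • (Polynomial.X ^ (s.ncard - 2 * t.card) : Polynomial ℝ)

section Aux
set_option linter.unusedSectionVars false

variable [Fintype V] [DecidableEq V]

private lemma sgn_self (Γ : SignedGraph V) (v : V) : Γ.sgn v v = 0 :=
  Γ.zero v v (Γ.G.irrefl)

private lemma adj_of_sgn_ne (Γ : SignedGraph V) {u v : V} (h : Γ.sgn u v ≠ 0) : Γ.G.Adj u v := by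
  by_contra hc; exact h (Γ.zero u v hc)

private lemma comp_neg_comp_neg (p : ℝ[X]) : (p.comp (-X)).comp (-X) = p := by
  rw [Polynomial.comp_assoc]
  simp

private lemma comp_neg_ne_zero {p : ℝ[X]} (hp : p ≠ 0) : p.comp (-X) ≠ 0 := by
  intro h
  apply hp
  rw [← comp_neg_comp_neg p, h, Polynomial.zero_comp]

private lemma le_rm_comp_neg (p : ℝ[X]) (hp : p ≠ 0) (a : ℝ) :
    p.rootMultiplicity (-a) ≤ (p.comp (-X)).rootMultiplicity a := by
  set n := p.rootMultiplicity (-a) with hn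
  rw [Polynomial.le_rootMultiplicity_iff (comp_neg_ne_zero hp)]
  obtain ⟨r, hr⟩ := Polynomial.pow_rootMultiplicity_dvd p (-a)
  refine ⟨(-1 : ℝ[X]) ^ n * r.comp (-X), ?_⟩
  rw [hr, Polynomial.mul_comp, Polynomial.pow_comp, Polynomial.sub_comp]
  simp only [Polynomial.X_comp, Polynomial.C_comp, Polynomial.map_neg, Polynomial.C_neg, Polynomial.neg_comp]
  have hx : (-X - -Polynomial.C a : ℝ[X]) = -(X - Polynomial.C a) := by ring
  rw [hx, neg_pow]
  ring

private lemma rm_comp_neg (p : ℝ[X]) (hp : p ≠ 0) (a : ℝ) :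
    (p.comp (-X)).rootMultiplicity a = p.rootMultiplicity (-a) := by
  refine le_antisymm ?_ (le_rm_comp_neg p hp a)
  have := le_rm_comp_neg (p.comp (-X)) (comp_neg_ne_zero hp) (-a)
  rwa [neg_neg, comp_neg_comp_neg] at this

private lemma rm_neg_poly (p : ℝ[X]) (a : ℝ) :
    (-p).rootMultiplicity a = p.rootMultiplicity a := by
  by_cases hp : p = 0
  · simp [hp]
  · have hn : -p ≠ 0 := neg_ne_zero.2 hp
    refine le_antisymm ?_ ?_
    · rw [Polynomial.le_rootMultiplicity_iff hp]
      exact (dvd_neg).1 (Polynomial.pow_rootMultiplicity_dvd (-p) a)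
    · rw [Polynomial.le_rootMultiplicity_iff hn]
      exact (dvd_neg).2 (Polynomial.pow_rootMultiplicity_dvd p a)

private lemma charpoly_neg_eq (A : Matrix V V ℝ) :
    (-A).charpoly = (-1 : ℝ[X]) ^ (Fintype.card V) * (A.charpoly.comp (-X)) := by
  classical
  let φ : ℝ[X] →+* ℝ[X] := Polynomial.eval₂RingHom Polynomial.C (-X)
  have hφ : ∀ p : ℝ[X], φ p = p.comp (-X) := fun p => rfl
  have hmat : (Matrix.charmatrix A).map φ = -(Matrix.charmatrix (-A)) := by
    ext i j
    by_cases h : i = j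
    · subst h
      simp [Matrix.charmatrix_apply_eq, hφ, Polynomial.sub_comp]
      ring
    · simp [Matrix.charmatrix_apply_ne _ _ _ h, hφ, Matrix.charmatrix_apply_ne]
  have hdet : φ (A.charpoly) = ((Matrix.charmatrix A).map φ).det := by
    rw [Matrix.charpoly, RingHom.map_det]
    rfl
  rw [hmat] at hdet
  rw [Matrix.det_neg] at hdet
  have : A.charpoly.comp (-X) = (-1 : ℝ[X]) ^ (Fintype.card V) * (-A).charpoly := by
    rw [← hφ, hdet, Matrix.charpoly]
  rw [this, ← mul_assoc, ← pow_add, ← two_mul, pow_mul]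
  norm_num

private lemma symmSpec_of_charpoly_eq (Γ : SignedGraph V)
    (h : (-Γ.adjMatrix).charpoly = Γ.adjMatrix.charpoly) : Γ.SymmetricSpectrum := by
  intro x
  have hne : Γ.adjMatrix.charpoly ≠ 0 := (Matrix.charpoly_monic _).ne_zero
  have h1 : Γ.adjMatrix.charpoly.rootMultiplicity (-x)
      = (Γ.adjMatrix.charpoly.comp (-X)).rootMultiplicity x := (rm_comp_neg _ hne x).symm
  rw [h1]
  have h2 : (-Γ.adjMatrix).charpoly = (-1 : ℝ[X]) ^ (Fintype.card V)
      * (Γ.adjMatrix.charpoly.comp (-X)) := charpoly_neg_eq _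
  by_cases hev : Even (Fintype.card V)
  · rw [hev.neg_one_pow, one_mul] at h2
    rw [← h2, h]
  · rw [(Nat.not_even_iff_odd.1 hev).neg_one_pow, neg_one_mul] at h2
    have : Γ.adjMatrix.charpoly.comp (-X) = -(-Γ.adjMatrix).charpoly := by rw [h2, neg_neg]
    rw [this, rm_neg_poly, h]

end Aux
section Aux2
set_option linter.unusedSectionVars false
variable [Fintype V] [DecidableEq V]

private noncomputable def dterm (Γ : SignedGraph V) (σ : Equiv.Perm V) (i : V) : ℝ[X] :=
  if σ i = i then X else Polynomial.C (Γ.adjMatrix (σ i) i)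

private noncomputable def fterm (Γ : SignedGraph V) (σ : Equiv.Perm V) : ℝ[X] :=
  ((Equiv.Perm.sign σ : ℤ) : ℝ[X]) * ∏ i, dterm Γ σ i

private lemma charpoly_neg_expand (Γ : SignedGraph V) :
    (-Γ.adjMatrix).charpoly = ∑ σ : Equiv.Perm V, fterm Γ σ := by
  rw [Matrix.charpoly, Matrix.det_apply']
  refine Finset.sum_congr rfl fun σ _ => ?_
  unfold fterm
  congr 1
  refine Finset.prod_congr rfl fun i _ => ?_
  unfold dterm
  by_cases h : σ i = i
  · rw [if_pos h, h, Matrix.charmatrix_apply_eq]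
    simp [SignedGraph.adjMatrix, sgn_self]
  · rw [if_neg h, Matrix.charmatrix_apply_ne _ _ _ h]
    simp

private lemma charpoly_expand (Γ : SignedGraph V) :
    Γ.adjMatrix.charpoly
      = ∑ σ : Equiv.Perm V, ((-1 : ℝ[X]) ^ σ.support.card) * fterm Γ σ := by
  rw [Matrix.charpoly, Matrix.det_apply']
  refine Finset.sum_congr rfl fun σ _ => ?_
  have h1 : ∀ i, Matrix.charmatrix Γ.adjMatrix (σ i) i
      = (if σ i = i then (1:ℝ[X]) else -1) * dterm Γ σ i := by
    intro i
    unfold dterm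
    by_cases h : σ i = i
    · rw [if_pos h, if_pos h, h, Matrix.charmatrix_apply_eq]
      simp [SignedGraph.adjMatrix, sgn_self]
    · rw [if_neg h, if_neg h, Matrix.charmatrix_apply_ne _ _ _ h]
      ring
  have h2 : (Finset.univ.filter fun i => ¬ σ i = i) = σ.support := by
    ext i; simp [Equiv.Perm.mem_support]
  rw [Finset.prod_congr rfl fun i _ => h1 i, Finset.prod_mul_distrib]
  have h3 : (∏ i, if σ i = i then (1:ℝ[X]) else -1) = (-1 : ℝ[X]) ^ σ.support.card := by
    rw [← Finset.prod_filter_mul_prod_filter_not Finset.univ (fun i => σ i = i)]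
    rw [Finset.prod_congr rfl (fun i hi => if_pos (Finset.mem_filter.1 hi).2),
      Finset.prod_congr rfl (fun i hi => if_neg (Finset.mem_filter.1 hi).2)]
    simp [h2]
  rw [h3]
  unfold fterm
  ring

private lemma charpoly_eq_of_T (Γ : SignedGraph V)
    (hT : ∑ σ ∈ Finset.univ.filter (fun σ : Equiv.Perm V => Odd σ.support.card),
      fterm Γ σ = 0) :
    (-Γ.adjMatrix).charpoly = Γ.adjMatrix.charpoly := by
  rw [charpoly_expand, charpoly_neg_expand]
  rw [← sub_eq_zero, ← Finset.sum_sub_distrib]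
  have key : ∀ σ : Equiv.Perm V, fterm Γ σ - (-1:ℝ[X])^σ.support.card * fterm Γ σ
      = if Odd σ.support.card then 2 * fterm Γ σ else 0 := by
    intro σ
    by_cases h : Odd σ.support.card
    · rw [if_pos h, h.neg_one_pow]; ring
    · rw [if_neg h, (Nat.not_odd_iff_even.1 h).neg_one_pow]; ring
  rw [Finset.sum_congr rfl (fun σ _ => key σ), ← Finset.sum_filter, ← Finset.mul_sum, hT,
    mul_zero]

end Aux2
section Aux3
set_option linter.unusedSectionVars false
set_option maxHeartbeats 1000000
variable [Fintype V] [DecidableEq V]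

/-- `c` is an "orientation permutation" of the subgraph `D`. -/
private def OcycP (Γ : SignedGraph V) (D : Γ.G.Subgraph) (c : Equiv.Perm V) : Prop :=
  (∀ x : V, c x ≠ x ↔ x ∈ D.verts) ∧ ∀ x ∈ D.verts, D.Adj x (c x) ∧ c (c x) ≠ x

private noncomputable def OcycF (Γ : SignedGraph V) (D : Γ.G.Subgraph) :
    Finset (Equiv.Perm V) :=
  Finset.univ.filter (OcycP Γ D)

private lemma mem_OcycF {Γ : SignedGraph V} {D : Γ.G.Subgraph} {c : Equiv.Perm V} :
    c ∈ OcycF Γ D ↔ OcycP Γ D c := by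
  simp [OcycF]

private lemma nbr_pin {Γ : SignedGraph V} {D : Γ.G.Subgraph}
    (hreg : ∀ v ∈ D.verts, (D.neighborSet v).ncard = 2) {v a b : V}
    (hv : v ∈ D.verts) (ha : D.Adj v a) (hb : D.Adj v b) (hab : a ≠ b) :
    ∀ x, D.Adj v x → x = a ∨ x = b := by
  obtain ⟨p, q, hpq, hset⟩ := Set.ncard_eq_two.1 (hreg v hv)
  have hmem : ∀ y, D.Adj v y → y = p ∨ y = q := by
    intro y hy
    have h1 : y ∈ D.neighborSet v := hy
    rw [hset] at h1
    simpa using h1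
  intro x hx
  rcases hmem a ha with h | h <;> rcases hmem b hb with h' | h' <;>
    rcases hmem x hx with h'' | h'' <;> simp_all

private lemma ocyc_moves {Γ : SignedGraph V} {D : Γ.G.Subgraph} {c : Equiv.Perm V}
    (hc : OcycP Γ D c) {x : V} (hx : x ∈ D.verts) : c x ≠ x := (hc.1 x).2 hx

private lemma ocyc_fix {Γ : SignedGraph V} {D : Γ.G.Subgraph} {c : Equiv.Perm V}
    (hc : OcycP Γ D c) {x : V} (hx : x ∉ D.verts) : c x = x := by
  by_contra h
  exact hx ((hc.1 x).1 h)

private lemma ocyc_inv {Γ : SignedGraph V} {D : Γ.G.Subgraph} {c : Equiv.Perm V}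
    (hc : OcycP Γ D c) {x : V} (hx : x ∈ D.verts) :
    c⁻¹ x ∈ D.verts ∧ D.Adj x (c⁻¹ x) ∧ c⁻¹ x ≠ c x := by
  have hmove : c x ≠ x := ocyc_moves hc hx
  have hinvmove : c⁻¹ x ≠ x := by
    intro h
    have h2 := congrArg c h
    rw [Equiv.Perm.apply_inv_self] at h2
    exact hmove h2.symm
  have hinvmem : c⁻¹ x ∈ D.verts := (hc.1 _).1 (by
    rw [Equiv.Perm.apply_inv_self]
    exact fun h => hinvmove h.symm)
  have hadj : D.Adj (c⁻¹ x) (c (c⁻¹ x)) := (hc.2 _ hinvmem).1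
  rw [Equiv.Perm.apply_inv_self] at hadj
  refine ⟨hinvmem, hadj.symm, ?_⟩
  intro h
  apply (hc.2 x hx).2
  rw [← h, Equiv.Perm.apply_inv_self]

private lemma ocyc_nbr {Γ : SignedGraph V} {D : Γ.G.Subgraph}
    (hreg : ∀ v ∈ D.verts, (D.neighborSet v).ncard = 2) {c : Equiv.Perm V}
    (hc : OcycP Γ D c) {x y : V} (hx : x ∈ D.verts) (hxy : D.Adj x y) :
    y = c x ∨ y = c⁻¹ x := by
  obtain ⟨_, hadj, hne⟩ := ocyc_inv hc hx
  exact nbr_pin hreg hx (hc.2 x hx).1 hadj (Ne.symm hne) y hxy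

private lemma ocyc_inv_mem {Γ : SignedGraph V} {D : Γ.G.Subgraph} {c : Equiv.Perm V}
    (hc : OcycP Γ D c) : OcycP Γ D c⁻¹ := by
  constructor
  · intro x
    rw [← hc.1 x]
    constructor
    · intro h h'
      apply h
      conv_lhs => rw [← h']
      simp
    · intro h h'
      apply h
      conv_lhs => rw [← h']
      simp
  · intro x hx
    obtain ⟨hm, hadj, hne⟩ := ocyc_inv hc hx
    refine ⟨hadj, ?_⟩
    intro h
    apply hne
    have := congrArg c h
    rw [Equiv.Perm.apply_inv_self] at this
    rw [this]

private lemma ocyc_sameCycle {Γ : SignedGraph V} {D : Γ.G.Subgraph}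
    (hreg : ∀ v ∈ D.verts, (D.neighborSet v).ncard = 2)
    (hconn : D.coe.Connected) {c : Equiv.Perm V} (hc : OcycP Γ D c)
    {x y : V} (hx : x ∈ D.verts) (hy : y ∈ D.verts) : c.SameCycle x y := by
  have hreach : D.coe.Reachable ⟨x, hx⟩ ⟨y, hy⟩ := hconn.preconnected _ _
  obtain ⟨w⟩ := hreach
  have : ∀ (a b : D.verts) (w : D.coe.Walk a b), c.SameCycle a.1 b.1 := by
    intro a b w
    induction w with
    | nil => exact ⟨0, by simp⟩
    | @cons a' b' c'' hadj p ih =>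
      refine Equiv.Perm.SameCycle.trans ?_ ih
      have hadj' : D.Adj a'.1 b'.1 := hadj
      rcases ocyc_nbr hreg hc a'.2 hadj' with h1 | h1
      · exact ⟨1, by rw [zpow_one, ← h1]⟩
      · exact ⟨-1, by rw [zpow_neg_one, ← h1]⟩
  exact this _ _ w

private lemma ocyc_isCycle {Γ : SignedGraph V} {D : Γ.G.Subgraph}
    (hreg : ∀ v ∈ D.verts, (D.neighborSet v).ncard = 2)
    (hconn : D.coe.Connected) (hne : D.verts.Nonempty) {c : Equiv.Perm V}
    (hc : OcycP Γ D c) : c.IsCycle := by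
  obtain ⟨v0, hv0⟩ := hne
  exact ⟨v0, ocyc_moves hc hv0, fun y hy =>
    ocyc_sameCycle hreg hconn hc hv0 ((hc.1 y).1 hy)⟩

private lemma ocyc_support {Γ : SignedGraph V} {D : Γ.G.Subgraph} {c : Equiv.Perm V}
    (hc : OcycP Γ D c) : (c.support : Set V) = D.verts := by
  ext x
  simp [Equiv.Perm.mem_support, hc.1 x]

private lemma ocyc_card {Γ : SignedGraph V} {D : Γ.G.Subgraph} {c : Equiv.Perm V}
    (hc : OcycP Γ D c) : c.support.card = D.verts.ncard := by
  rw [← ocyc_support hc, Set.ncard_coe_finset]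

private lemma ocyc_unique {Γ : SignedGraph V} {D : Γ.G.Subgraph}
    (hreg : ∀ v ∈ D.verts, (D.neighborSet v).ncard = 2)
    (hconn : D.coe.Connected) {c c' : Equiv.Perm V}
    (hc : OcycP Γ D c) (hc' : OcycP Γ D c') {v0 : V} (hv0 : v0 ∈ D.verts)
    (h0 : c v0 = c' v0) : c = c' := by
  set P : V → Prop := fun x => x ∈ D.verts ∧ c x = c' x ∧ c⁻¹ x = c'⁻¹ x with hP
  have base : P v0 := by
    refine ⟨hv0, h0, ?_⟩
    have h1 : D.Adj v0 (c'⁻¹ v0) := (ocyc_inv hc' hv0).2.1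
    rcases ocyc_nbr hreg hc hv0 h1 with h2 | h2
    · exfalso
      exact (ocyc_inv hc' hv0).2.2 (by rw [h2, h0])
    · rw [h2]
  have stepc : ∀ x, P x → P (c x) := by
    rintro x ⟨hx, h1, h2⟩
    have hcx : c x ∈ D.verts := (hc.2 x hx).1.snd_mem
    refine ⟨hcx, ?_, ?_⟩
    · have hadj : D.Adj (c x) (c' (c x)) := (hc'.2 _ hcx).1
      rcases ocyc_nbr hreg hc hcx hadj with h3 | h3
      · exact h3.symm
      · exfalso
        apply (hc'.2 x hx).2
        rw [← h1, h3, Equiv.Perm.inv_apply_self]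
    · have e2 : c'⁻¹ (c x) = x := by rw [h1, Equiv.Perm.inv_apply_self]
      rw [Equiv.Perm.inv_apply_self, e2]
  have stepinv : ∀ x, P x → P (c⁻¹ x) := by
    rintro x ⟨hx, h1, h2⟩
    have hz : c⁻¹ x ∈ D.verts := (ocyc_inv hc hx).1
    refine ⟨hz, ?_, ?_⟩
    · have e2 : c' (c⁻¹ x) = x := by rw [h2, Equiv.Perm.apply_inv_self]
      rw [Equiv.Perm.apply_inv_self, e2]
    · have hadj : D.Adj (c⁻¹ x) (c'⁻¹ (c⁻¹ x)) := (ocyc_inv hc' hz).2.1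
      rcases ocyc_nbr hreg hc hz hadj with h3 | h3
      · exfalso
        have e1 : c'⁻¹ (c⁻¹ x) = x := by rw [h3, Equiv.Perm.apply_inv_self]
        have e2 := congrArg c' e1
        rw [Equiv.Perm.apply_inv_self] at e2
        exact (ocyc_inv hc' hx).2.2 (by rw [← h2, e2])
      · rw [h3]
  have hall : ∀ k : ℤ, P ((c ^ k) v0) := by
    intro k
    induction k using Int.induction_on with
    | zero => simpa using base
    | succ n ih =>
      have hh : (c ^ ((n : ℤ) + 1)) v0 = c ((c ^ (n : ℤ)) v0) := by
        rw [add_comm, zpow_one_add]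
        rfl
      rw [hh]
      exact stepc _ ih
    | pred n ih =>
      have hh : (c ^ (-(n : ℤ) - 1)) v0 = c⁻¹ ((c ^ (-(n : ℤ))) v0) := by
        rw [sub_eq_add_neg, add_comm, zpow_add, zpow_neg_one]
        rfl
      rw [hh]
      exact stepinv _ ih
  refine Equiv.ext fun x => ?_
  by_cases hx : x ∈ D.verts
  · obtain ⟨k, hk⟩ := ocyc_sameCycle hreg hconn hc hv0 hx
    have hP := hall k
    rw [hk] at hP
    exact hP.2.1
  · rw [ocyc_fix hc hx, ocyc_fix hc' hx]

end Aux3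
section Aux4
set_option linter.unusedSectionVars false
set_option maxHeartbeats 1000000
variable [Fintype V] [DecidableEq V]

private lemma involution_aux : ∀ (n : ℕ) (τ : Equiv.Perm V), τ.support.card ≤ n →
    (∀ x, τ (τ x) = x) →
    ∃ m, τ.support.card = 2 * m ∧ Equiv.Perm.sign τ = (-1) ^ m := by
  intro n
  induction n with
  | zero =>
    intro τ h hinv
    have hsupp : τ.support = ∅ := Finset.card_eq_zero.1 (Nat.le_zero.1 h)
    have hτ : τ = 1 := Equiv.Perm.support_eq_empty_iff.1 hsupp
    exact ⟨0, by simp [hsupp, hτ]⟩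
  | succ n ih =>
    intro τ h hinv
    rcases Finset.eq_empty_or_nonempty τ.support with he | ⟨x, hx⟩
    · have hτ : τ = 1 := Equiv.Perm.support_eq_empty_iff.1 he
      exact ⟨0, by simp [he, hτ]⟩
    · set y := τ x with hy
      have hxy : y ≠ x := Equiv.Perm.mem_support.1 hx
      have hyx : τ y = x := hinv x
      set τ' := τ * Equiv.swap x y with hτ'
      have happ : ∀ z, τ' z = τ (Equiv.swap x y z) := fun z => rfl
      have h'x : τ' x = x := by rw [happ, Equiv.swap_apply_left, hyx]
      have h'y : τ' y = y := by rw [happ, Equiv.swap_apply_right, ← hy]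
      have hother : ∀ z, z ≠ x → z ≠ y → τ' z = τ z := by
        intro z h1 h2
        rw [happ, Equiv.swap_apply_of_ne_of_ne h1 h2]
      have hinv' : ∀ z, τ' (τ' z) = z := by
        intro z
        by_cases h1 : z = x
        · rw [h1, h'x, h'x]
        · by_cases h2 : z = y
          · rw [h2, h'y, h'y]
          · have hz1 : τ z ≠ x := by
              intro hh
              apply h2
              have h3 := congrArg τ hh
              rw [hinv z] at h3
              rw [h3]
            have hz2 : τ z ≠ y := by
              intro hh
              apply h1
              have h3 := congrArg τ hh
              rw [hinv z, hyx] at h3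
              exact h3
            rw [hother z h1 h2, hother _ hz1 hz2, hinv]
      have hsup : τ'.support = τ.support \ {x, y} := by
        ext z
        by_cases h1 : z = x
        · subst h1
          simp [Equiv.Perm.mem_support, h'x]
        · by_cases h2 : z = y
          · subst h2
            simp [Equiv.Perm.mem_support, h'y]
          · simp [Equiv.Perm.mem_support, hother z h1 h2, h1, h2]
      have hymem : y ∈ τ.support := by
        rw [Equiv.Perm.mem_support, hyx]
        exact fun hh => hxy hh.symm
      have hsub : ({x, y} : Finset V) ⊆ τ.support := by
        intro z hz
        rcases Finset.mem_insert.1 hz with rfl | hz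
        · exact hx
        · rwa [Finset.mem_singleton.1 hz]
      have hcard : τ'.support.card = τ.support.card - 2 := by
        rw [hsup, Finset.card_sdiff_of_subset hsub, Finset.card_pair (Ne.symm hxy)]
      have h2le : 2 ≤ τ.support.card := by
        have := Finset.card_le_card hsub
        rwa [Finset.card_pair (Ne.symm hxy)] at this
      obtain ⟨m, hm1, hm2⟩ := ih τ' (by omega) hinv'
      refine ⟨m + 1, by omega, ?_⟩
      have hτeq : τ = τ' * Equiv.swap x y := by
        rw [hτ', mul_assoc, Equiv.swap_mul_self, mul_one]
      rw [hτeq, Equiv.Perm.sign_mul, hm2, Equiv.Perm.sign_swap (Ne.symm hxy), pow_succ]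

private lemma involution_sign (τ : Equiv.Perm V) (hinv : ∀ x, τ (τ x) = x) :
    ∃ m, τ.support.card = 2 * m ∧ Equiv.Perm.sign τ = (-1) ^ m :=
  involution_aux _ τ le_rfl hinv

end Aux4
section Aux5
set_option linter.unusedSectionVars false
set_option maxHeartbeats 1000000
variable [Fintype V] [DecidableEq V]

/-- The neighbor of `v` other than `a`, in a 2-regular subgraph. -/
private noncomputable def oth {Γ : SignedGraph V} (D : Γ.G.Subgraph) (a v : V) : V :=
  if h : (D.neighborSet v \ {a}).Nonempty then h.choose else v

private lemma oth_mem {Γ : SignedGraph V} {D : Γ.G.Subgraph} {a v : V}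
    (hne : (D.neighborSet v \ {a}).Nonempty) :
    oth D a v ∈ D.neighborSet v \ {a} := by
  unfold oth
  rw [dif_pos hne]
  exact hne.choose_spec

private lemma oth_spec {Γ : SignedGraph V} {D : Γ.G.Subgraph}
    (hreg : ∀ v ∈ D.verts, (D.neighborSet v).ncard = 2) {a v : V}
    (hv : v ∈ D.verts) (ha : D.Adj v a) :
    D.Adj v (oth D a v) ∧ oth D a v ≠ a ∧ ∀ b, D.Adj v b → b ≠ a → b = oth D a v := by
  obtain ⟨p, q, hpq, hset⟩ := Set.ncard_eq_two.1 (hreg v hv)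
  have hmem : ∀ y, D.Adj v y ↔ (y = p ∨ y = q) := by
    intro y
    constructor
    · intro hy
      have h1 : y ∈ D.neighborSet v := hy
      rw [hset] at h1
      simpa using h1
    · intro hy
      have h1 : y ∈ D.neighborSet v := by rw [hset]; simpa using hy
      exact h1
  have hsetdiff : D.neighborSet v \ {a} = {oth D a v} ∧ oth D a v ≠ a ∧ D.Adj v (oth D a v) := by
    rcases (hmem a).1 ha with rfl | rfl
    · have hdiff : D.neighborSet v \ {a} = {q} := by
        rw [hset]
        ext z
        simp only [Set.mem_diff, Set.mem_insert_iff, Set.mem_singleton_iff]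
        constructor
        · rintro ⟨h1 | h1, h2⟩
          · exact absurd h1 h2
          · exact h1
        · rintro rfl
          exact ⟨Or.inr rfl, Ne.symm hpq⟩
      have hne : (D.neighborSet v \ {a}).Nonempty := by rw [hdiff]; exact ⟨q, rfl⟩
      have hch : oth D a v = q := by
        have h1 := oth_mem hne
        rw [hdiff] at h1
        exact h1
      rw [hch, hdiff]
      exact ⟨rfl, Ne.symm hpq, (hmem q).2 (Or.inr rfl)⟩
    · have hdiff : D.neighborSet v \ {a} = {p} := by
        rw [hset]
        ext z
        simp only [Set.mem_diff, Set.mem_insert_iff, Set.mem_singleton_iff]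
        constructor
        · rintro ⟨h1 | h1, h2⟩
          · exact h1
          · exact absurd h1 h2
        · rintro rfl
          exact ⟨Or.inl rfl, hpq⟩
      have hne : (D.neighborSet v \ {a}).Nonempty := by rw [hdiff]; exact ⟨p, rfl⟩
      have hch : oth D a v = p := by
        have h1 := oth_mem hne
        rw [hdiff] at h1
        exact h1
      rw [hch, hdiff]
      exact ⟨rfl, hpq, (hmem p).2 (Or.inl rfl)⟩
  obtain ⟨hdiff, hne2, hadj2⟩ := hsetdiff
  refine ⟨hadj2, hne2, ?_⟩
  intro b hb hba
  have h1 : b ∈ D.neighborSet v \ {a} := ⟨hb, hba⟩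
  rw [hdiff] at h1
  exact h1

private lemma adj_ne {Γ : SignedGraph V} {D : Γ.G.Subgraph} {a b : V} (h : D.Adj a b) :
    a ≠ b := (D.adj_sub h).ne

/-- The step permutation on directed edges of a 2-regular subgraph. -/
private noncomputable def stepPerm {Γ : SignedGraph V} (D : Γ.G.Subgraph)
    (hreg : ∀ v ∈ D.verts, (D.neighborSet v).ncard = 2) :
    Equiv.Perm {p : V × V // D.Adj p.1 p.2} where
  toFun e := ⟨(e.1.2, oth D e.1.1 e.1.2), (oth_spec hreg e.2.snd_mem e.2.symm).1⟩
  invFun e := ⟨(oth D e.1.2 e.1.1, e.1.1), ((oth_spec hreg e.2.fst_mem e.2).1).symm⟩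
  left_inv := by
    rintro ⟨⟨a, b⟩, he⟩
    apply Subtype.ext
    have h1 := oth_spec hreg he.snd_mem he.symm
    have h2 : a = oth D (oth D a b) b :=
      (oth_spec hreg he.snd_mem h1.1).2.2 a he.symm (fun hh => h1.2.1 hh.symm)
    exact Prod.ext h2.symm rfl
  right_inv := by
    rintro ⟨⟨b, c⟩, he⟩
    apply Subtype.ext
    have h1 := oth_spec hreg he.fst_mem he
    have h2 : c = oth D (oth D c b) b :=
      (oth_spec hreg he.fst_mem h1.1).2.2 c he (fun hh => h1.2.1 hh.symm)
    exact Prod.ext rfl h2.symm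

private lemma stepPerm_apply {Γ : SignedGraph V} {D : Γ.G.Subgraph}
    (hreg : ∀ v ∈ D.verts, (D.neighborSet v).ncard = 2)
    (e : {p : V × V // D.Adj p.1 p.2}) :
    ((stepPerm D hreg e : {p : V × V // D.Adj p.1 p.2}) : V × V)
      = (e.1.2, oth D e.1.1 e.1.2) := rfl

end Aux5
section Aux5b
set_option linter.unusedSectionVars false
set_option maxHeartbeats 1000000
variable [Fintype V] [DecidableEq V]

private lemma zpow_apply_succ {α : Type*} (st : Equiv.Perm α) (k : ℤ) (e : α) :
    st ((st ^ k) e) = (st ^ (k + 1)) e := by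
  rw [← Equiv.Perm.mul_apply, show k + 1 = 1 + k by ring, zpow_add, zpow_one]

private def revP {Γ : SignedGraph V} (D : Γ.G.Subgraph) :
    {p : V × V // D.Adj p.1 p.2} → {p : V × V // D.Adj p.1 p.2} :=
  fun e => ⟨(e.1.2, e.1.1), e.2.symm⟩

private lemma step_rev_step {Γ : SignedGraph V} {D : Γ.G.Subgraph}
    (hreg : ∀ v ∈ D.verts, (D.neighborSet v).ncard = 2)
    (e : {p : V × V // D.Adj p.1 p.2}) :
    stepPerm D hreg (revP D (stepPerm D hreg e)) = revP D e := by
  obtain ⟨⟨a, b⟩, he⟩ := e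
  apply Subtype.ext
  have h1 := oth_spec hreg he.snd_mem he.symm
  have h2 : a = oth D (oth D a b) b :=
    (oth_spec hreg he.snd_mem h1.1).2.2 a he.symm (fun hh => h1.2.1 hh.symm)
  exact Prod.ext rfl h2.symm

private lemma rev_step_inv {Γ : SignedGraph V} {D : Γ.G.Subgraph}
    (hreg : ∀ v ∈ D.verts, (D.neighborSet v).ncard = 2)
    (e : {p : V × V // D.Adj p.1 p.2}) :
    revP D (stepPerm D hreg e) = (stepPerm D hreg)⁻¹ (revP D e) := by
  have h2 := congrArg (⇑(stepPerm D hreg)⁻¹) (step_rev_step hreg e)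
  rwa [Equiv.Perm.inv_apply_self] at h2

private lemma rev_zpow {Γ : SignedGraph V} {D : Γ.G.Subgraph}
    (hreg : ∀ v ∈ D.verts, (D.neighborSet v).ncard = 2) :
    ∀ (k : ℤ) (e : {p : V × V // D.Adj p.1 p.2}),
      revP D ((stepPerm D hreg ^ k) e) = ((stepPerm D hreg) ^ (-k)) (revP D e) := by
  intro k
  induction k using Int.induction_on with
  | zero => intro e; simp
  | succ n ih =>
    intro e
    have h1 : ((stepPerm D hreg) ^ ((n : ℤ) + 1)) e
        = ((stepPerm D hreg) ^ (n : ℤ)) (stepPerm D hreg e) := by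
      rw [zpow_add_one]; rfl
    rw [h1, ih (stepPerm D hreg e), rev_step_inv hreg e,
      show -((n : ℤ) + 1) = -(n : ℤ) + -1 by ring, zpow_add, zpow_neg_one]
    rfl
  | pred n ih =>
    intro e
    have h1 : ((stepPerm D hreg) ^ (-(n : ℤ) - 1)) e
        = ((stepPerm D hreg) ^ (-(n : ℤ))) ((stepPerm D hreg)⁻¹ e) := by
      rw [sub_eq_add_neg, zpow_add, zpow_neg_one]; rfl
    have h2 : revP D ((stepPerm D hreg)⁻¹ e) = stepPerm D hreg (revP D e) := by
      have h3 := rev_step_inv hreg ((stepPerm D hreg)⁻¹ e)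
      rw [Equiv.Perm.apply_inv_self] at h3
      have h4 := congrArg (⇑(stepPerm D hreg)) h3
      rw [Equiv.Perm.apply_inv_self] at h4
      exact h4.symm
    rw [h1, ih _, h2, show -(-(n : ℤ) - 1) = -(-(n : ℤ)) + 1 by ring, zpow_add_one]
    rfl

private lemma step_collision {Γ : SignedGraph V} {D : Γ.G.Subgraph}
    (hreg : ∀ v ∈ D.verts, (D.neighborSet v).ncard = 2)
    (f' g' : {p : V × V // D.Adj p.1 p.2})
    (hfst : ((stepPerm D hreg f' : {p : V × V // D.Adj p.1 p.2}) : V × V).1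
      = ((stepPerm D hreg g' : {p : V × V // D.Adj p.1 p.2}) : V × V).1)
    (hne : stepPerm D hreg f' ≠ stepPerm D hreg g') :
    stepPerm D hreg g' = revP D f' := by
  obtain ⟨⟨u, v⟩, hf⟩ := f'
  obtain ⟨⟨u', v2⟩, hg⟩ := g'
  have hv2 : v = v2 := hfst
  subst hv2
  have hvmem : v ∈ D.verts := hf.snd_mem
  have hAvu : D.Adj v u := hf.symm
  have hAvu' : D.Adj v u' := hg.symm
  have hx := oth_spec hreg hvmem hAvu
  have hy := oth_spec hreg hvmem hAvu'
  have hxyne : oth D u v ≠ oth D u' v := by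
    intro hh
    exact hne (Subtype.ext (Prod.ext rfl hh))
  have hu'c : u' = u ∨ u' = oth D u v :=
    nbr_pin hreg hvmem hAvu hx.1 (Ne.symm hx.2.1) u' hAvu'
  rcases hu'c with rfl | hu'x
  · exact absurd rfl hxyne
  · have hcase : oth D u' v = u ∨ oth D u' v = oth D u v :=
      nbr_pin hreg hvmem hAvu hx.1 (Ne.symm hx.2.1) _ hy.1
    have hfin : oth D u' v = u := by
      rcases hcase with hh | hh
      · exact hh
      · exfalso
        rw [← hu'x] at hh
        exact hy.2.1 hh
    exact Subtype.ext (Prod.ext rfl hfin)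

private lemma step_fst_inj {Γ : SignedGraph V} {D : Γ.G.Subgraph}
    (hreg : ∀ v ∈ D.verts, (D.neighborSet v).ncard = 2)
    (e0 : {p : V × V // D.Adj p.1 p.2}) (i j : ℤ)
    (h : ((((stepPerm D hreg) ^ i) e0 : {p : V × V // D.Adj p.1 p.2}) : V × V).1
      = ((((stepPerm D hreg) ^ j) e0 : {p : V × V // D.Adj p.1 p.2}) : V × V).1) :
    ((stepPerm D hreg) ^ i) e0 = ((stepPerm D hreg) ^ j) e0 := by
  by_contra hne
  have contra : ∀ m : ℤ, revP D e0 ≠ ((stepPerm D hreg) ^ m) e0 := by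
    intro m hrev
    rcases Int.even_or_odd m with ⟨t, ht⟩ | ⟨t, ht⟩
    · have h1 := rev_zpow hreg t e0
      rw [hrev, ← Equiv.Perm.mul_apply, ← zpow_add] at h1
      have hexp : -t + m = t := by omega
      rw [hexp] at h1
      have h3 : (((stepPerm D hreg ^ t) e0 : {p : V × V // D.Adj p.1 p.2}) : V × V).2
          = (((stepPerm D hreg ^ t) e0 : {p : V × V // D.Adj p.1 p.2}) : V × V).1 :=
        congrArg (fun f : {p : V × V // D.Adj p.1 p.2} => (f : V × V).1) h1
      exact adj_ne ((stepPerm D hreg ^ t) e0).2 h3.symm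
    · have h1 := rev_zpow hreg t e0
      rw [hrev, ← Equiv.Perm.mul_apply, ← zpow_add] at h1
      have hexp : -t + m = t + 1 := by omega
      rw [hexp, ← zpow_apply_succ] at h1
      have hsnd : (((stepPerm D hreg ^ t) e0 : {p : V × V // D.Adj p.1 p.2}) : V × V).1
          = oth D (((stepPerm D hreg ^ t) e0 : {p : V × V // D.Adj p.1 p.2}) : V × V).1
              (((stepPerm D hreg ^ t) e0 : {p : V × V // D.Adj p.1 p.2}) : V × V).2 :=
        congrArg (fun f : {p : V × V // D.Adj p.1 p.2} => (f : V × V).2) h1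
      exact (oth_spec hreg ((stepPerm D hreg ^ t) e0).2.snd_mem
        ((stepPerm D hreg ^ t) e0).2.symm).2.1 hsnd.symm
  have hstep_i : stepPerm D hreg (((stepPerm D hreg) ^ (i - 1)) e0)
      = ((stepPerm D hreg) ^ i) e0 := by
    rw [zpow_apply_succ, sub_add_cancel]
  have hstep_j : stepPerm D hreg (((stepPerm D hreg) ^ (j - 1)) e0)
      = ((stepPerm D hreg) ^ j) e0 := by
    rw [zpow_apply_succ, sub_add_cancel]
  have hcol := step_collision hreg (((stepPerm D hreg) ^ (i - 1)) e0)
    (((stepPerm D hreg) ^ (j - 1)) e0)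
    (by rw [hstep_i, hstep_j]; exact h)
    (by rw [hstep_i, hstep_j]; exact hne)
  rw [hstep_j] at hcol
  apply contra (i - 1 + j)
  have h6 : ((stepPerm D hreg) ^ j) e0
      = ((stepPerm D hreg) ^ (-(i - 1))) (revP D e0) := by
    rw [hcol, rev_zpow hreg (i - 1) e0]
  have h7 := congrArg (⇑((stepPerm D hreg) ^ (i - 1))) h6
  rw [← Equiv.Perm.mul_apply, ← Equiv.Perm.mul_apply, ← zpow_add, ← zpow_add,
    add_neg_cancel, zpow_zero] at h7
  simp only [Equiv.Perm.coe_one, id_eq] at h7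
  exact h7.symm

end Aux5b
section Aux5c
set_option linter.unusedSectionVars false
set_option maxHeartbeats 1000000
variable [Fintype V] [DecidableEq V]

private lemma ocyc_exists {Γ : SignedGraph V} {D : Γ.G.Subgraph}
    (hreg : ∀ v ∈ D.verts, (D.neighborSet v).ncard = 2)
    (hconn : D.coe.Connected) (hne : D.verts.Nonempty) :
    ∃ c : Equiv.Perm V, OcycP Γ D c := by
  classical
  obtain ⟨v0, hv0⟩ := hne
  obtain ⟨p, q, hpq, hset⟩ := Set.ncard_eq_two.1 (hreg v0 hv0)
  have hu0 : D.Adj v0 p := by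
    have h1 : p ∈ D.neighborSet v0 := by rw [hset]; exact Or.inl rfl
    exact h1
  let e0 : {p : V × V // D.Adj p.1 p.2} := ⟨(v0, p), hu0⟩
  let S : Set {p : V × V // D.Adj p.1 p.2} :=
    {e | ∃ k : ℤ, ((stepPerm D hreg) ^ k) e0 = e}
  have hS_step : ∀ e ∈ S, stepPerm D hreg e ∈ S := by
    rintro e ⟨k, rfl⟩
    exact ⟨k + 1, (zpow_apply_succ _ k e0).symm⟩
  have hS_inv : ∀ e ∈ S, (stepPerm D hreg)⁻¹ e ∈ S := by
    rintro e ⟨k, rfl⟩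
    refine ⟨k - 1, ?_⟩
    have h1 := zpow_apply_succ (stepPerm D hreg) (k - 1) e0
    rw [sub_add_cancel] at h1
    have h2 := congrArg (⇑(stepPerm D hreg)⁻¹) h1
    rwa [Equiv.Perm.inv_apply_self] at h2
  have huniq : ∀ e ∈ S, ∀ e' ∈ S, (e : {p : V × V // D.Adj p.1 p.2}).1.1 = e'.1.1 → e = e' := by
    rintro e ⟨i, rfl⟩ e' ⟨j, rfl⟩ hh
    exact step_fst_inj hreg e0 i j hh
  let F : Set V := {v | ∃ e, e ∈ S ∧ (e : {p : V × V // D.Adj p.1 p.2}).1.1 = v}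
  have hFsub : F ⊆ D.verts := by
    rintro v ⟨e, _, rfl⟩
    exact e.2.fst_mem
  have hFadj : ∀ v ∈ F, ∀ w, D.Adj v w → w ∈ F := by
    rintro v ⟨e, heS, rfl⟩ w hw
    have hx : D.Adj e.1.1 e.1.2 := e.2
    have h1 : e.1.2 ∈ F := ⟨stepPerm D hreg e, hS_step e heS, rfl⟩
    have h2 : oth D e.1.2 e.1.1 ∈ F := ⟨(stepPerm D hreg)⁻¹ e, hS_inv e heS, rfl⟩
    have hospec := oth_spec hreg e.2.fst_mem hx
    rcases nbr_pin hreg e.2.fst_mem hx hospec.1 (Ne.symm hospec.2.1) w hw with rfl | rfl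
    · exact h1
    · exact h2
  have hFall : D.verts ⊆ F := by
    intro v hv
    have hv0F : v0 ∈ F := ⟨e0, ⟨0, by simp⟩, rfl⟩
    have key : ∀ (a b : D.verts) (w : D.coe.Walk a b), a.1 ∈ F → b.1 ∈ F := by
      intro a b w
      induction w with
      | nil => exact id
      | @cons a' b' c'' hadj pth ih =>
        intro ha
        have hadj' : D.Adj a'.1 b'.1 := hadj
        exact ih (hFadj a'.1 ha b'.1 hadj')
    obtain ⟨w⟩ := hconn.preconnected ⟨v0, hv0⟩ ⟨v, hv⟩
    exact key _ _ w hv0F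
  have hchoice : ∀ v, v ∈ F → ∃ e : {p : V × V // D.Adj p.1 p.2},
      e ∈ S ∧ e.1.1 = v := fun v hv => hv
  choose ev hevS hevfst using hchoice
  obtain ⟨nxt, hnxt⟩ : ∃ f : V → V, ∀ v, (∀ h : v ∈ F, f v = (ev v h).1.2)
      ∧ (v ∉ F → f v = v) :=
    ⟨fun v => if h : v ∈ F then (ev v h).1.2 else v,
      fun v => ⟨fun h => dif_pos h, fun h => dif_neg h⟩⟩
  have hinj : Function.Injective nxt := by
    intro v w hvw
    by_cases hv : v ∈ F <;> by_cases hw : w ∈ F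
    · rw [(hnxt v).1 hv, (hnxt w).1 hw] at hvw
      have h1 : stepPerm D hreg (ev v hv) ∈ S := hS_step _ (hevS v hv)
      have h2 : stepPerm D hreg (ev w hw) ∈ S := hS_step _ (hevS w hw)
      have h3 : (stepPerm D hreg (ev v hv)).1.1 = (stepPerm D hreg (ev w hw)).1.1 := hvw
      have h4 := huniq _ h1 _ h2 h3
      have h5 := congrArg (⇑(stepPerm D hreg)⁻¹) h4
      rw [Equiv.Perm.inv_apply_self, Equiv.Perm.inv_apply_self] at h5
      rw [← hevfst v hv, ← hevfst w hw, h5]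
    · exfalso
      have h1 : nxt v ∈ F := by
        rw [(hnxt v).1 hv]
        exact ⟨stepPerm D hreg (ev v hv), hS_step _ (hevS v hv), rfl⟩
      rw [hvw, (hnxt w).2 hw] at h1
      exact hw h1
    · exfalso
      have h1 : nxt w ∈ F := by
        rw [(hnxt w).1 hw]
        exact ⟨stepPerm D hreg (ev w hw), hS_step _ (hevS w hw), rfl⟩
      rw [← hvw, (hnxt v).2 hv] at h1
      exact hv h1
    · rw [(hnxt v).2 hv, (hnxt w).2 hw] at hvw
      exact hvw
  refine ⟨Equiv.ofBijective nxt (Finite.injective_iff_bijective.1 hinj), ?_, ?_⟩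
  · intro x
    constructor
    · intro hx
      by_contra hmem
      have hxF : x ∉ F := fun hf => hmem (hFsub hf)
      apply hx
      show nxt x = x
      exact (hnxt x).2 hxF
    · intro hx
      have hxF : x ∈ F := hFall hx
      show nxt x ≠ x
      rw [(hnxt x).1 hxF]
      intro hh
      exact adj_ne (ev x hxF).2 ((hevfst x hxF).trans hh.symm)
  · intro x hx
    have hxF : x ∈ F := hFall hx
    constructor
    · show D.Adj x (nxt x)
      rw [(hnxt x).1 hxF]
      have h2 := (ev x hxF).2
      rw [hevfst x hxF] at h2
      exact h2
    · show nxt (nxt x) ≠ x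
      rw [(hnxt x).1 hxF]
      have hyF : (ev x hxF).1.2 ∈ F :=
        ⟨stepPerm D hreg (ev x hxF), hS_step _ (hevS x hxF), rfl⟩
      rw [(hnxt _).1 hyF]
      have h4 : ev _ hyF = stepPerm D hreg (ev x hxF) :=
        huniq _ (hevS _ hyF) _ (hS_step _ (hevS x hxF)) (hevfst _ hyF)
      rw [h4]
      intro hh
      have h5 : oth D (ev x hxF).1.1 (ev x hxF).1.2 = (ev x hxF).1.1 :=
        hh.trans (hevfst x hxF).symm
      exact (oth_spec hreg (ev x hxF).2.snd_mem (ev x hxF).2.symm).2.1 h5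

end Aux5c
section Aux7
set_option linter.unusedSectionVars false
set_option maxHeartbeats 1000000
variable [Fintype V] [DecidableEq V]

private noncomputable def MinvF (Γ : SignedGraph V) (s : Set V) : Finset (Equiv.Perm V) :=
  Finset.univ.filter fun τ => (∀ x, τ (τ x) = x) ∧ ∀ x, τ x ≠ x → x ∈ s ∧ Γ.G.Adj x (τ x)

private lemma mem_MinvF {Γ : SignedGraph V} {s : Set V} {τ : Equiv.Perm V} :
    τ ∈ MinvF Γ s ↔ (∀ x, τ (τ x) = x) ∧ ∀ x, τ x ≠ x → x ∈ s ∧ Γ.G.Adj x (τ x) := by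
  simp [MinvF]

private def matchSet (Γ : SignedGraph V) (s : Set V) : Set (Finset (Sym2 V)) :=
  {t : Finset (Sym2 V) | (↑t : Set (Sym2 V)) ⊆ Γ.G.edgeSet ∧
      (∀ e ∈ t, ∀ v ∈ e, v ∈ s) ∧
      (∀ e ∈ t, ∀ f ∈ t, e ≠ f → ∀ v : V, ¬(v ∈ e ∧ v ∈ f))}

private lemma minv_sum_eq_matchingPoly (Γ : SignedGraph V) (s : Set V) :
    ∑ τ ∈ MinvF Γ s, ((Equiv.Perm.sign τ : ℤ) : ℝ[X])
        * Polynomial.X ^ (s.ncard - τ.support.card)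
      = matchingPolyOn Γ.G s := by
  classical
  have hset : matchingPolyOn Γ.G s = ∑ t ∈ Finset.univ.filter (· ∈ matchSet Γ s),
      ((-1 : ℝ) ^ t.card) • (Polynomial.X ^ (s.ncard - 2 * t.card) : ℝ[X]) := by
    rw [matchingPolyOn, ← finsum_mem_coe_finset]
    congr 1
    ext t
    simp [matchSet]
  rw [hset]
  refine Finset.sum_bij (fun τ _ => τ.support.image (fun x => s(x, τ x))) ?_ ?_ ?_ ?_
  · -- maps into matchSet
    intro τ hτ
    obtain ⟨hinv, hmv⟩ := mem_MinvF.1 hτ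
    simp only [Finset.mem_filter, Finset.mem_univ, true_and]
    refine ⟨?_, ?_, ?_⟩
    · intro e he
      simp only [Finset.coe_image, Set.mem_image, Finset.mem_coe] at he
      obtain ⟨x, hx, rfl⟩ := he
      exact (hmv x (Equiv.Perm.mem_support.1 hx)).2
    · intro e he v hv
      rw [Finset.mem_image] at he
      obtain ⟨x, hx, rfl⟩ := he
      have hxm : τ x ≠ x := Equiv.Perm.mem_support.1 hx
      rcases Sym2.mem_iff.1 hv with rfl | rfl
      · exact (hmv v hxm).1
      · refine (hmv (τ x) ?_).1
        rw [hinv x]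
        exact fun hh => hxm hh.symm
    · intro e he f hf hef v hvef
      rw [Finset.mem_image] at he hf
      obtain ⟨x, hx, rfl⟩ := he
      obtain ⟨y, hy, rfl⟩ := hf
      apply hef
      have hxm : τ x ≠ x := Equiv.Perm.mem_support.1 hx
      have hym : τ y ≠ y := Equiv.Perm.mem_support.1 hy
      have h1 : s(x, τ x) = s(v, τ v) := by
        rcases Sym2.mem_iff.1 hvef.1 with rfl | hv2
        · rfl
        · rw [hv2, hinv x]
          exact Sym2.eq_swap
      have h2 : s(y, τ y) = s(v, τ v) := by
        rcases Sym2.mem_iff.1 hvef.2 with rfl | hv2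
        · rfl
        · rw [hv2, hinv y]
          exact Sym2.eq_swap
      rw [h1, h2]
  · -- injective
    intro τ hτ τ' hτ' himg
    obtain ⟨hinv, hmv⟩ := mem_MinvF.1 hτ
    obtain ⟨hinv', hmv'⟩ := mem_MinvF.1 hτ'
    have key : ∀ (σ σ' : Equiv.Perm V), (∀ x, σ (σ x) = x) → (∀ x, σ' (σ' x) = x) →
        σ.support.image (fun x => s(x, σ x)) = σ'.support.image (fun x => s(x, σ' x)) →
        ∀ x, σ x ≠ x → σ' x = σ x := by
      intro σ σ' hi hi' him x hx
      have hmem : s(x, σ x) ∈ σ'.support.image (fun x => s(x, σ' x)) := by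
        rw [← him, Finset.mem_image]
        exact ⟨x, Equiv.Perm.mem_support.2 hx, rfl⟩
      rw [Finset.mem_image] at hmem
      obtain ⟨y, hy, hyy⟩ := hmem
      rw [Sym2.eq_iff] at hyy
      rcases hyy with ⟨rfl, h2⟩ | ⟨h1, h2⟩
      · exact h2
      · have h3 := congrArg σ' h2
        rw [hi' y] at h3
        rw [← h3]
        exact h1
    have himg' : τ.support.image (fun x => s(x, τ x))
        = τ'.support.image (fun x => s(x, τ' x)) := himg
    refine Equiv.ext fun x => ?_
    by_cases hx : τ x = x
    · by_cases hx' : τ' x = x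
      · rw [hx, hx']
      · exact key τ' τ hinv' hinv himg'.symm x hx'
    · exact (key τ τ' hinv hinv' himg' x hx).symm
  · -- surjective
    intro t ht
    simp only [Finset.mem_filter, Finset.mem_univ, true_and] at ht
    obtain ⟨hedge, hvert, hdisj⟩ := ht
    have hop : ∀ v, (∃ e ∈ t, v ∈ e) → ∃ w, s(v, w) ∈ t ∧ w ≠ v := by
      rintro v ⟨e, het, hve⟩
      refine ⟨Sym2.Mem.other hve, ?_, ?_⟩
      · rwa [Sym2.other_spec hve]
      · have hel : e ∈ Γ.G.edgeSet := hedge het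
        exact Sym2.other_ne (Γ.G.not_isDiag_of_mem_edgeSet hel) hve
    choose op hop1 hop2 using hop
    obtain ⟨tf, htf⟩ : ∃ f : V → V, ∀ v, (∀ h : ∃ e ∈ t, v ∈ e, f v = op v h)
        ∧ ((¬ ∃ e ∈ t, v ∈ e) → f v = v) :=
      ⟨fun v => if h : ∃ e ∈ t, v ∈ e then op v h else v,
        fun v => ⟨fun h => dif_pos h, fun h => dif_neg h⟩⟩
    have hcov : ∀ v (h : ∃ e ∈ t, v ∈ e), ∃ h' : ∃ e ∈ t, (op v h) ∈ e, True := by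
      intro v h
      exact ⟨⟨s(v, op v h), hop1 v h, Sym2.mem_mk_right v (op v h)⟩, trivial⟩
    have huniq_edge : ∀ v (h : ∃ e ∈ t, v ∈ e) e, e ∈ t → v ∈ e → e = s(v, op v h) := by
      intro v h e het hve
      by_contra hne
      exact hdisj e het s(v, op v h) (hop1 v h) hne v ⟨hve, Sym2.mem_mk_left _ _⟩
    have hinvol : ∀ v, tf (tf v) = v := by
      intro v
      by_cases h : ∃ e ∈ t, v ∈ e
      · rw [(htf v).1 h]
        have hwc : ∃ e ∈ t, op v h ∈ e :=
          ⟨s(v, op v h), hop1 v h, Sym2.mem_mk_right v (op v h)⟩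
        rw [(htf (op v h)).1 hwc]
        have he2 : s(v, op v h) = s(op v h, op (op v h) hwc) :=
          huniq_edge (op v h) hwc s(v, op v h) (hop1 v h) (Sym2.mem_mk_right v (op v h))
        rw [Sym2.eq_iff] at he2
        rcases he2 with ⟨h1, h2⟩ | ⟨h1, h2⟩
        · exact absurd h1.symm (hop2 v h)
        · exact h1.symm
      · rw [(htf v).2 h, (htf v).2 h]
    refine ⟨Function.Involutive.toPerm tf hinvol, ?_, ?_⟩
    · rw [mem_MinvF]
      constructor
      · exact hinvol
      · intro x hx
        have hshow : tf x ≠ x := hx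
        by_cases h : ∃ e ∈ t, x ∈ e
        · obtain ⟨e, het, hxe⟩ := h
          refine ⟨hvert e het x hxe, ?_⟩
          show Γ.G.Adj x (tf x)
          rw [(htf x).1 ⟨e, het, hxe⟩]
          have h2 : s(x, op x ⟨e, het, hxe⟩) ∈ t := hop1 x _
          have h3 := hedge h2
          rwa [SimpleGraph.mem_edgeSet] at h3
        · exact absurd ((htf x).2 h) hshow
    · -- image equals t
      ext e
      rw [Finset.mem_image]
      constructor
      · rintro ⟨x, hx, rfl⟩
        have hxm : Function.Involutive.toPerm tf hinvol x ≠ x := Equiv.Perm.mem_support.1 hx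
        have hxm' : tf x ≠ x := hxm
        by_cases h : ∃ e ∈ t, x ∈ e
        · have : (Function.Involutive.toPerm tf hinvol) x = op x h := (htf x).1 h
          rw [show s(x, (Function.Involutive.toPerm tf hinvol) x) = s(x, op x h) from by rw [this]]
          exact hop1 x h
        · exact absurd ((htf x).2 h) hxm'
      · intro het
        induction e with
        | _ u v =>
          have hu : ∃ e ∈ t, u ∈ e := ⟨s(u,v), het, Sym2.mem_mk_left u v⟩
          refine ⟨u, ?_, ?_⟩
          · rw [Equiv.Perm.mem_support]
            have : tf u = op u hu := (htf u).1 hu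
            show tf u ≠ u
            rw [this]
            exact hop2 u hu
          · show s(u, tf u) = s(u, v)
            rw [(htf u).1 hu]
            have := huniq_edge u hu s(u,v) het (Sym2.mem_mk_left u v)
            rw [this]
  · -- values
    intro τ hτ
    obtain ⟨hinv, hmv⟩ := mem_MinvF.1 hτ
    obtain ⟨m, hm1, hm2⟩ := involution_sign τ hinv
    have hfib : ∀ x ∈ τ.support,
        (τ.support.filter (fun y => s(y, τ y) = s(x, τ x))).card = 2 := by
      intro x hx
      have hxm : τ x ≠ x := Equiv.Perm.mem_support.1 hx
      have : τ.support.filter (fun y => s(y, τ y) = s(x, τ x)) = {x, τ x} := by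
        ext y
        simp only [Finset.mem_filter, Finset.mem_insert, Finset.mem_singleton,
          Equiv.Perm.mem_support]
        constructor
        · rintro ⟨hym, hyy⟩
          rw [Sym2.eq_iff] at hyy
          rcases hyy with ⟨h1, _⟩ | ⟨h1, _⟩
          · exact Or.inl h1
          · exact Or.inr h1
        · rintro (rfl | rfl)
          · exact ⟨hxm, rfl⟩
          · refine ⟨fun hh => hxm (by rw [hinv x] at hh; exact hh.symm), ?_⟩
            rw [hinv x]
            exact Sym2.eq_swap
      rw [this, Finset.card_pair (fun hh => hxm hh.symm)]
    have hcard : τ.support.card = 2 * (τ.support.image (fun x => s(x, τ x))).card := by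
      rw [Finset.card_eq_sum_card_image (fun x => s(x, τ x)) τ.support]
      have hall : ∀ e ∈ τ.support.image (fun x => s(x, τ x)),
          (τ.support.filter (fun y => s(y, τ y) = e)).card = 2 := by
        intro e he
        rw [Finset.mem_image] at he
        obtain ⟨x, hx, rfl⟩ := he
        exact hfib x hx
      rw [Finset.sum_congr rfl hall, Finset.sum_const, smul_eq_mul, mul_comm]
    have hmc : m = (τ.support.image (fun x => s(x, τ x))).card := by omega
    rw [hm2, hmc]
    rw [Polynomial.smul_eq_C_mul]
    have hpow : s.ncard - 2 * (τ.support.image (fun x => s(x, τ x))).card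
        = s.ncard - τ.support.card := by omega
    rw [hpow]
    congr 1
    push_cast
    rw [← hmc]
    norm_cast

end Aux7
section Aux6
set_option linter.unusedSectionVars false
set_option maxHeartbeats 1000000
variable [Fintype V] [DecidableEq V]

private lemma ocycF_pair {Γ : SignedGraph V} {D : Γ.G.Subgraph}
    (hreg : ∀ v ∈ D.verts, (D.neighborSet v).ncard = 2)
    (hconn : D.coe.Connected) (hne : D.verts.Nonempty) :
    ∃ c0 : Equiv.Perm V, OcycP Γ D c0 ∧ OcycF Γ D = {c0, c0⁻¹} ∧ c0 ≠ c0⁻¹ := by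
  obtain ⟨c0, hc0⟩ := ocyc_exists hreg hconn hne
  obtain ⟨v0, hv0⟩ := hne
  have hinv : OcycP Γ D c0⁻¹ := ocyc_inv_mem hc0
  have hnedup : c0 ≠ c0⁻¹ := by
    intro hh
    apply (hc0.2 v0 hv0).2
    have h1 : c0 (c0 v0) = (c0 * c0) v0 := rfl
    have h2 : c0 * c0 = 1 := by
      nth_rewrite 2 [hh]
      simp
    rw [h1, h2]
    rfl
  refine ⟨c0, hc0, ?_, hnedup⟩
  ext c
  simp only [mem_OcycF, Finset.mem_insert, Finset.mem_singleton]
  constructor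
  · intro hc
    rcases ocyc_nbr hreg hc0 hv0 ((hc.2 v0 hv0).1) with h1 | h1
    · left
      exact ocyc_unique hreg hconn hc hc0 hv0 h1
    · right
      exact ocyc_unique hreg hconn hc hinv hv0 h1
  · rintro (rfl | rfl)
    · exact hc0
    · exact hinv

private lemma ocyc_sign_one {Γ : SignedGraph V} {D : Γ.G.Subgraph}
    (hreg : ∀ v ∈ D.verts, (D.neighborSet v).ncard = 2)
    (hconn : D.coe.Connected) (hne : D.verts.Nonempty)
    (hodd : Odd D.verts.ncard) {c : Equiv.Perm V} (hc : OcycP Γ D c) :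
    Equiv.Perm.sign c = 1 := by
  have hcy := ocyc_isCycle hreg hconn hne hc
  rw [hcy.sign, ocyc_card hc, hodd.neg_one_pow]
  simp

private lemma ocyc_prod_sgn {Γ : SignedGraph V} {D : Γ.G.Subgraph}
    (hreg : ∀ v ∈ D.verts, (D.neighborSet v).ncard = 2)
    {c : Equiv.Perm V} (hc : OcycP Γ D c) :
    ∏ x ∈ c.support, Γ.sgn (c x) x = Γ.sgnProd D := by
  classical
  have hfin : D.edgeSet.Finite := Set.toFinite _
  have h1 : Γ.sgnProd D = ∏ e ∈ hfin.toFinset, Γ.sgnE e := by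
    rw [sgnProd, ← finprod_mem_coe_finset, Set.Finite.coe_toFinset]
  rw [h1]
  refine Finset.prod_bij (fun x _ => s(x, c x)) ?_ ?_ ?_ ?_
  · intro x hx
    rw [Set.Finite.mem_toFinset, SimpleGraph.Subgraph.mem_edgeSet]
    exact (hc.2 x ((hc.1 x).1 (Equiv.Perm.mem_support.1 hx))).1
  · intro x hx y hy hxy
    rw [Sym2.eq_iff] at hxy
    rcases hxy with ⟨h1, h2⟩ | ⟨h1, h2⟩
    · exact h1
    · exfalso
      have hxv : x ∈ D.verts := (hc.1 x).1 (Equiv.Perm.mem_support.1 hx)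
      apply (hc.2 x hxv).2
      rw [h2, ← h1]
    -- done injectivity
  · intro e he
    rw [Set.Finite.mem_toFinset] at he
    induction e with
    | _ u v =>
      rw [SimpleGraph.Subgraph.mem_edgeSet] at he
      have humem : u ∈ D.verts := he.fst_mem
      rcases ocyc_nbr hreg hc humem he with h1 | h1
      · refine ⟨u, ?_, ?_⟩
        · rw [Equiv.Perm.mem_support]
          intro hh
          rw [h1, hh] at he
          exact Γ.G.irrefl (D.adj_sub he)
        · show s(u, c u) = s(u, v)
          rw [h1]
      · have hvmem : v ∈ D.verts := by
          rw [h1]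
          exact (ocyc_inv hc humem).1
        have hu : u = c v := by rw [h1]; simp
        refine ⟨v, ?_, ?_⟩
        · rw [Equiv.Perm.mem_support]
          intro hh
          have h2 : D.Adj v u := he.symm
          rw [hu, hh] at h2
          exact Γ.G.irrefl (D.adj_sub h2)
        · show s(v, c v) = s(u, v)
          rw [hu]
          exact Sym2.eq_swap
  · intro x hx
    show Γ.sgn (c x) x = Γ.sgnE s(x, c x)
    rw [sgnE, Sym2.lift_mk]
    exact Γ.symm (c x) x

private lemma minv_prod_one {Γ : SignedGraph V} {τ : Equiv.Perm V}
    (hinv : ∀ x, τ (τ x) = x) (hadj : ∀ x, τ x ≠ x → Γ.G.Adj x (τ x)) :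
    ∏ x ∈ τ.support, Polynomial.C (Γ.adjMatrix (τ x) x) = 1 := by
  refine Finset.prod_involution (fun x _ => τ x) ?_ ?_ ?_ ?_
  · intro a ha
    show Polynomial.C (Γ.adjMatrix (τ a) a) * Polynomial.C (Γ.adjMatrix (τ (τ a)) (τ a)) = 1
    rw [hinv a, ← Polynomial.C_mul]
    have hmov : τ a ≠ a := Equiv.Perm.mem_support.1 ha
    have hAdj : Γ.G.Adj a (τ a) := hadj a hmov
    have hsymm : Γ.sgn (τ a) a = Γ.sgn a (τ a) := Γ.symm _ _
    rcases Γ.pm a (τ a) hAdj with h | h <;> simp [SignedGraph.adjMatrix, hsymm, h]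
  · intro a ha _
    show τ a ≠ a
    exact Equiv.Perm.mem_support.1 ha
  · intro a ha
    show τ a ∈ τ.support
    rw [Equiv.Perm.mem_support] at ha ⊢
    intro hh
    exact ha (((hinv a).symm.trans hh).symm)
  · intro a ha
    show τ (τ a) = a
    exact hinv a

end Aux6
section Aux8
set_option linter.unusedSectionVars false
set_option maxHeartbeats 1000000
variable [Fintype V] [DecidableEq V]

private lemma dprod_split (Γ : SignedGraph V) (σ : Equiv.Perm V) :
    ∏ i, dterm Γ σ i = (∏ i ∈ σ.support, Polynomial.C (Γ.adjMatrix (σ i) i))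
      * Polynomial.X ^ (Fintype.card V - σ.support.card) := by
  rw [← Finset.prod_mul_prod_compl σ.support (dterm Γ σ)]
  congr 1
  · refine Finset.prod_congr rfl fun i hi => ?_
    rw [dterm, if_neg (Equiv.Perm.mem_support.1 hi)]
  · have hall : ∀ i ∈ σ.supportᶜ, dterm Γ σ i = Polynomial.X := by
      intro i hi
      rw [Finset.mem_compl, Equiv.Perm.notMem_support] at hi
      rw [dterm, if_pos hi]
    rw [Finset.prod_congr rfl hall, Finset.prod_const, Finset.card_compl]

private lemma perm_disjoint {Γ : SignedGraph V} {D : Γ.G.Subgraph} {c τ : Equiv.Perm V}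
    (hc : OcycP Γ D c) (hτ : τ ∈ MinvF Γ (D.vertsᶜ)) : c.Disjoint τ := by
  intro x
  by_cases hx : x ∈ D.verts
  · right
    by_contra hmov
    exact ((mem_MinvF.1 hτ).2 x hmov).1 hx
  · left
    exact ocyc_fix hc hx

private lemma minv_supp_card_even {Γ : SignedGraph V} {s : Set V} {τ : Equiv.Perm V}
    (hτ : τ ∈ MinvF Γ s) : Even τ.support.card := by
  obtain ⟨m, hm, _⟩ := involution_sign τ (mem_MinvF.1 hτ).1
  exact ⟨m, by omega⟩

private lemma fterm_mul (Γ : SignedGraph V) {D : Γ.G.Subgraph}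
    (hreg : ∀ v ∈ D.verts, (D.neighborSet v).ncard = 2)
    {c τ : Equiv.Perm V} (hc : OcycP Γ D c) (hτ : τ ∈ MinvF Γ (D.vertsᶜ)) :
    fterm Γ (c * τ) = ((Equiv.Perm.sign c : ℤ) : ℝ[X]) * (((Equiv.Perm.sign τ : ℤ) : ℝ[X])
      * Polynomial.X ^ ((D.vertsᶜ).ncard - τ.support.card))
      * Polynomial.C ((Γ.sgnProd D : ℤ) : ℝ) := by
  have hdisj : c.Disjoint τ := perm_disjoint hc hτ
  have hsupp : (c * τ).support = c.support ∪ τ.support := hdisj.support_mul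
  have hdisjf : Disjoint c.support τ.support := hdisj.disjoint_support
  have happc : ∀ i ∈ c.support, (c * τ) i = c i := by
    intro i hi
    have : τ i = i := by
      rcases hdisj i with h | h
      · exact absurd h (Equiv.Perm.mem_support.1 hi)
      · exact h
    show c (τ i) = c i
    rw [this]
  have happτ : ∀ i ∈ τ.support, (c * τ) i = τ i := by
    intro i hi
    have hτi : τ i ∈ τ.support := Equiv.Perm.apply_mem_support.2 hi
    have : c (τ i) = τ i := by
      rcases hdisj (τ i) with h | h
      · exact h
      · exact absurd h (Equiv.Perm.mem_support.1 hτi)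
    exact this
  rw [fterm, dprod_split]
  rw [hsupp, Finset.prod_union hdisjf]
  have hprodc : ∏ i ∈ c.support, Polynomial.C (Γ.adjMatrix ((c * τ) i) i)
      = Polynomial.C ((Γ.sgnProd D : ℤ) : ℝ) := by
    rw [Finset.prod_congr rfl (fun i hi => by rw [happc i hi])]
    have hmap : ∀ i, Polynomial.C (Γ.adjMatrix (c i) i)
        = (Polynomial.C.comp (Int.castRingHom ℝ)) (Γ.sgn (c i) i) := by
      intro i
      rfl
    rw [Finset.prod_congr rfl (fun i _ => hmap i), ← map_prod, ocyc_prod_sgn hreg hc]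
    rfl
  have hprodτ : ∏ i ∈ τ.support, Polynomial.C (Γ.adjMatrix ((c * τ) i) i) = 1 := by
    rw [Finset.prod_congr rfl (fun i hi => by rw [happτ i hi])]
    exact minv_prod_one (mem_MinvF.1 hτ).1 (fun x hx => ((mem_MinvF.1 hτ).2 x hx).2)
  rw [hprodc, hprodτ]
  have hsign : ((Equiv.Perm.sign (c * τ) : ℤ) : ℝ[X])
      = ((Equiv.Perm.sign c : ℤ) : ℝ[X]) * ((Equiv.Perm.sign τ : ℤ) : ℝ[X]) := by
    rw [Equiv.Perm.sign_mul]
    push_cast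
    ring
  rw [hsign]
  have hcomp : (D.vertsᶜ).ncard = Fintype.card V - D.verts.ncard := by
    have h1 := Set.ncard_add_ncard_compl D.verts
    rw [Nat.card_eq_fintype_card] at h1
    omega
  have hle : (c.support ∪ τ.support).card ≤ Fintype.card V :=
    le_trans (Finset.card_le_card (Finset.subset_univ _)) (le_of_eq (Finset.card_univ))
  have hcard : (c.support ∪ τ.support).card = c.support.card + τ.support.card :=
    Finset.card_union_of_disjoint hdisjf
  have hexp : Fintype.card V - (c.support ∪ τ.support).card
      = (D.vertsᶜ).ncard - τ.support.card := by
    rw [hcard, hcomp, ← ocyc_card hc]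
    rw [hcard] at hle
    omega
  rw [hexp]
  ring

/-- The subgraph `D` is determined by the permutation `c * τ`. -/
private lemma D_determined {Γ : SignedGraph V} {D : Γ.G.Subgraph}
    (hreg : ∀ v ∈ D.verts, (D.neighborSet v).ncard = 2)
    {c τ : Equiv.Perm V} (hc : OcycP Γ D c) (hτ : τ ∈ MinvF Γ (D.vertsᶜ)) :
    (∀ x, x ∈ D.verts ↔ (c * τ) ((c * τ) x) ≠ x) ∧
    (∀ x y, D.Adj x y ↔ (x ∈ D.verts ∧ y ∈ D.verts ∧ ((c * τ) x = y ∨ (c * τ) y = x))) := by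
  obtain ⟨hinv, hmov⟩ := mem_MinvF.1 hτ
  have happ_in : ∀ x ∈ D.verts, (c * τ) x = c x := by
    intro x hx
    have hτx : τ x = x := by
      by_contra hmv
      exact (hmov x hmv).1 hx
    show c (τ x) = c x
    rw [hτx]
  have happ_out : ∀ x, x ∉ D.verts → (c * τ) x = τ x := by
    intro x hx
    show c (τ x) = τ x
    by_cases hmv : τ x = x
    · rw [hmv]
      exact ocyc_fix hc hx
    · refine ocyc_fix hc ?_
      have hτm : τ (τ x) ≠ τ x := by
        rw [hinv x]
        exact fun hh => hmv hh.symm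
      exact (hmov (τ x) hτm).1
  have hmem : ∀ x, x ∈ D.verts ↔ (c * τ) ((c * τ) x) ≠ x := by
    intro x
    constructor
    · intro hx
      rw [happ_in x hx, happ_in _ ((hc.2 x hx).1.snd_mem)]
      exact (hc.2 x hx).2
    · intro hmv
      by_contra hx
      apply hmv
      rw [happ_out x hx]
      by_cases h2 : τ x = x
      · rw [h2, happ_out x hx, h2]
      · have hτxout : τ x ∉ D.verts := (hmov (τ x) (by
          rw [hinv x]; exact fun hh => h2 hh.symm)).1
        rw [happ_out _ hτxout, hinv x]
  refine ⟨hmem, ?_⟩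
  intro x y
  constructor
  · intro hadj
    have hx : x ∈ D.verts := hadj.fst_mem
    have hy : y ∈ D.verts := hadj.snd_mem
    refine ⟨hx, hy, ?_⟩
    rcases ocyc_nbr hreg hc hx hadj with h1 | h1
    · left
      rw [happ_in x hx, h1]
    · right
      rw [happ_in y hy]
      rw [h1]
      simp
  · rintro ⟨hx, hy, h1 | h1⟩
    · rw [happ_in x hx] at h1
      rw [← h1]
      exact (hc.2 x hx).1
    · rw [happ_in y hy] at h1
      have := (hc.2 y hy).1
      rw [h1] at this
      exact this.symm

end Aux8
section Aux9
set_option linter.unusedSectionVars false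
set_option maxHeartbeats 1000000
variable [Fintype V] [DecidableEq V]

private lemma classify (Γ : SignedGraph V)
    (σ : Equiv.Perm V) (hoddsupp : Odd σ.support.card)
    (hprod : ∏ i, dterm Γ σ i ≠ 0) :
    ∃ (D : Γ.G.Subgraph) (c τ : Equiv.Perm V),
      (Γ.IsTwoRegular D ∧ Odd D.verts.ncard) ∧ OcycP Γ D c ∧ τ ∈ MinvF Γ (D.vertsᶜ)
        ∧ σ = c * τ := by
  classical
  have hadjall : ∀ i, σ i ≠ i → Γ.G.Adj (σ i) i := by
    intro i hmv
    have hne := Finset.prod_ne_zero_iff.1 hprod i (Finset.mem_univ i)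
    rw [dterm, if_neg hmv] at hne
    have h2 : Γ.adjMatrix (σ i) i ≠ 0 := fun hh => hne (by rw [hh, Polynomial.C_0])
    apply adj_of_sgn_ne Γ
    intro hh
    exact h2 (by rw [SignedGraph.adjMatrix, hh, Int.cast_zero])
  set L : Set V := {x | σ (σ x) ≠ x} with hLdef
  have hL : ∀ x, x ∈ L ↔ σ x ∈ L := by
    intro x
    show σ (σ x) ≠ x ↔ σ (σ (σ x)) ≠ σ x
    rw [not_iff_not]
    exact ⟨fun h => by rw [h], fun h => σ.injective h⟩
  have hLmov : ∀ x ∈ L, σ x ≠ x := by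
    intro x hx hh
    exact hx (by rw [hh, hh])
  have hLinv : ∀ x, x ∈ L ↔ σ⁻¹ x ∈ L := by
    intro x
    have h1 := hL (σ⁻¹ x)
    rw [Equiv.Perm.apply_inv_self] at h1
    exact h1.symm
  -- the subgraph spanned by the long cycles
  set D : Γ.G.Subgraph :=
    { verts := L
      Adj := fun u v => u ∈ L ∧ v ∈ L ∧ (σ u = v ∨ σ v = u)
      adj_sub := by
        rintro u v ⟨hu, hv, h1 | h1⟩
        · rw [← h1]
          exact (hadjall u (hLmov u hu)).symm
        · rw [← h1]
          exact hadjall v (hLmov v hv)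
      edge_vert := fun h => h.1
      symm := by
        refine ⟨?_⟩
        rintro u v ⟨hu, hv, h1⟩
        exact ⟨hv, hu, h1.symm⟩ } with hDdef
  -- the cycle part
  let c : Equiv.Perm V := Equiv.Perm.ofSubtype (σ.subtypePerm (fun x => (hL x).symm))
  have hc_in : ∀ x (hx : x ∈ L), c x = σ x := by
    intro x hx
    exact Equiv.Perm.ofSubtype_apply_of_mem (σ.subtypePerm (fun x => (hL x).symm)) hx
  have hc_out : ∀ x, x ∉ L → c x = x := by
    intro x hx
    exact Equiv.Perm.ofSubtype_apply_of_not_mem (σ.subtypePerm (fun x => (hL x).symm)) hx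
  have hcOcyc : OcycP Γ D c := by
    constructor
    · intro x
      constructor
      · intro hmv
        by_contra hx
        exact hmv (hc_out x hx)
      · intro hx
        rw [hc_in x hx]
        exact hLmov x hx
    · intro x hx
      have hσx : σ x ∈ L := (hL x).1 hx
      constructor
      · rw [hc_in x hx]
        exact ⟨hx, hσx, Or.inl rfl⟩
      · rw [hc_in x hx, hc_in _ hσx]
        exact hx
  -- the matching part
  let τ : Equiv.Perm V := c⁻¹ * σ
  have hστ : σ = c * τ := by
    rw [mul_inv_cancel_left]
  have hτ_in : ∀ x ∈ L, τ x = x := by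
    intro x hx
    show c⁻¹ (σ x) = x
    rw [← hc_in x hx, Equiv.Perm.inv_apply_self]
  have hτ_out : ∀ x, x ∉ L → τ x = σ x := by
    intro x hx
    show c⁻¹ (σ x) = σ x
    have hσx : σ x ∉ L := fun hh => hx ((hL x).2 hh)
    rw [Equiv.Perm.inv_eq_iff_eq]
    exact (hc_out _ hσx).symm
  have hτinv : ∀ x, τ (τ x) = x := by
    intro x
    by_cases hx : x ∈ L
    · rw [hτ_in x hx, hτ_in x hx]
    · rw [hτ_out x hx]
      have hσx : σ x ∉ L := fun hh => hx ((hL x).2 hh)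
      rw [hτ_out _ hσx]
      have hfix := hx
      simp only [hLdef, Set.mem_setOf_eq, not_not] at hfix
      exact hfix
  have hτmem : τ ∈ MinvF Γ (D.vertsᶜ) := by
    rw [mem_MinvF]
    refine ⟨hτinv, ?_⟩
    intro x hmv
    have hx : x ∉ L := fun hh => hmv (hτ_in x hh)
    rw [hτ_out x hx] at hmv ⊢
    exact ⟨hx, (hadjall x hmv).symm⟩
  -- two-regularity
  have hnbr : ∀ v ∈ L, D.neighborSet v = {σ v, σ⁻¹ v} := by
    intro v hv
    ext w
    constructor
    · rintro ⟨_, hw, h1 | h1⟩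
      · exact Or.inl h1.symm
      · right
        rw [← h1, Equiv.Perm.inv_apply_self]
        exact rfl
    · rintro (rfl | rfl)
      · exact ⟨hv, (hL v).1 hv, Or.inl rfl⟩
      · exact ⟨hv, (hLinv v).1 hv, Or.inr (Equiv.Perm.apply_inv_self σ v)⟩
  have hσne : ∀ v ∈ L, σ v ≠ σ⁻¹ v := by
    intro v hv hh
    apply hv
    have := congrArg σ hh
    rw [Equiv.Perm.apply_inv_self] at this
    exact this
  -- cardinality of L is odd
  have hdisj : c.Disjoint τ := perm_disjoint hcOcyc hτmem
  have hsupp : σ.support = c.support ∪ τ.support := by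
    rw [hστ]
    exact hdisj.support_mul
  have hcardσ : σ.support.card = c.support.card + τ.support.card := by
    rw [hsupp]
    exact Finset.card_union_of_disjoint hdisj.disjoint_support
  have hLodd : Odd D.verts.ncard := by
    rw [← ocyc_card hcOcyc]
    obtain ⟨m, hm, _⟩ := involution_sign τ hτinv
    rw [hcardσ, hm] at hoddsupp
    rcases hoddsupp with ⟨k, hk⟩
    exact ⟨k - m, by omega⟩
  have hTwoReg : Γ.IsTwoRegular D := by
    constructor
    · by_contra hne
      rw [Set.not_nonempty_iff_eq_empty] at hne
      have h0 : D.verts.ncard = 0 := by rw [hne]; simp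
      rw [h0] at hLodd
      simp at hLodd
    · intro v hv
      rw [hnbr v hv]
      exact Set.ncard_pair (hσne v hv)
  exact ⟨D, c, τ, ⟨hTwoReg, hLodd⟩, hcOcyc, hτmem, hστ⟩

end Aux9
section Main
set_option linter.unusedSectionVars false
set_option maxHeartbeats 2000000
variable [Fintype V] [DecidableEq V]

private lemma hoddsupp_mul (Γ : SignedGraph V) (D : Γ.G.Subgraph)
    (hD : Odd D.verts.ncard) {c τ : Equiv.Perm V} (hc : c ∈ OcycF Γ D)
    (hτ : τ ∈ MinvF Γ (D.vertsᶜ)) : Odd (c * τ).support.card := by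
  have hdisj := perm_disjoint (mem_OcycF.1 hc) hτ
  rw [hdisj.support_mul, Finset.card_union_of_disjoint hdisj.disjoint_support,
    ocyc_card (mem_OcycF.1 hc)]
  obtain ⟨m, hm, _⟩ := involution_sign τ (mem_MinvF.1 hτ).1
  rcases hD with ⟨k, hk⟩
  exact ⟨k + m, by omega⟩

private lemma pair_inj (Γ : SignedGraph V) (D : Γ.G.Subgraph) :
    ∀ p ∈ (OcycF Γ D) ×ˢ (MinvF Γ (D.vertsᶜ)),
    ∀ q ∈ (OcycF Γ D) ×ˢ (MinvF Γ (D.vertsᶜ)),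
      p.1 * p.2 = q.1 * q.2 → p = q := by
  rintro ⟨c, τ⟩ hp ⟨c', τ'⟩ hq heq
  rw [Finset.mem_product] at hp hq
  have hcP := mem_OcycF.1 hp.1
  have hc'P := mem_OcycF.1 hq.1
  have hτP := mem_MinvF.1 hp.2
  have hτ'P := mem_MinvF.1 hq.2
  have hcc : c = c' := by
    refine Equiv.ext fun x => ?_
    by_cases hx : x ∈ D.verts
    · have hτx : τ x = x := by
        by_contra hmv
        exact (hτP.2 x hmv).1 hx
      have hτ'x : τ' x = x := by
        by_contra hmv
        exact (hτ'P.2 x hmv).1 hx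
      have h1 : (c * τ) x = (c' * τ') x := by rw [heq]
      simp only [Equiv.Perm.mul_apply, hτx, hτ'x] at h1
      exact h1
    · rw [ocyc_fix hcP hx, ocyc_fix hc'P hx]
  subst hcc
  have : τ = τ' := mul_left_cancel heq
  rw [this]

private lemma D_sum (Γ : SignedGraph V) (D : Γ.G.Subgraph)
    (hreg2 : Γ.IsTwoRegular D) (hDodd : Odd D.verts.ncard) (hconn : D.coe.Connected) :
    ∑ σ ∈ ((OcycF Γ D) ×ˢ (MinvF Γ (D.vertsᶜ))).image (fun p => p.1 * p.2), fterm Γ σ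
      = 2 * (matchingPolyOn Γ.G (D.vertsᶜ) * Polynomial.C ((Γ.sgnProd D : ℤ) : ℝ)) := by
  classical
  have hreg := hreg2.2
  have hne := hreg2.1
  rw [Finset.sum_image (pair_inj Γ D), Finset.sum_product]
  have hterm : ∀ c ∈ OcycF Γ D, ∀ τ ∈ MinvF Γ (D.vertsᶜ),
      fterm Γ (c * τ) = (((Equiv.Perm.sign τ : ℤ) : ℝ[X])
        * Polynomial.X ^ ((D.vertsᶜ).ncard - τ.support.card))
        * Polynomial.C ((Γ.sgnProd D : ℤ) : ℝ) := by
    intro c hcF τ hτF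
    rw [fterm_mul Γ hreg (mem_OcycF.1 hcF) hτF,
      ocyc_sign_one hreg hconn hne hDodd (mem_OcycF.1 hcF)]
    push_cast
    ring
  have hinner : ∀ c ∈ OcycF Γ D, ∑ τ ∈ MinvF Γ (D.vertsᶜ), fterm Γ (c * τ)
      = matchingPolyOn Γ.G (D.vertsᶜ) * Polynomial.C ((Γ.sgnProd D : ℤ) : ℝ) := by
    intro c hcF
    rw [Finset.sum_congr rfl (hterm c hcF), ← Finset.sum_mul,
      minv_sum_eq_matchingPoly]
  rw [Finset.sum_congr rfl hinner, Finset.sum_const]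
  obtain ⟨c0, hc0, hpair, hne0⟩ := ocycF_pair hreg hconn hne
  rw [hpair, Finset.card_pair hne0, two_smul, two_mul]

private lemma T_zero (Γ : SignedGraph V)
    (C1 C2 : Γ.G.Subgraph) (h12 : C1 ≠ C2)
    (hc1 : C1.coe.Connected) (hc2 : C2.coe.Connected)
    (hodd : {B : Γ.G.Subgraph | Γ.IsTwoRegular B ∧ Odd B.verts.ncard} = {C1, C2})
    (hM : matchingPolyOn Γ.G C1.vertsᶜ = matchingPolyOn Γ.G C2.vertsᶜ)
    (hsgn : Γ.sgnProd C1 * Γ.sgnProd C2 = -1) :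
    ∑ σ ∈ Finset.univ.filter (fun σ : Equiv.Perm V => Odd σ.support.card),
      fterm Γ σ = 0 := by
  classical
  have hC1mem : Γ.IsTwoRegular C1 ∧ Odd C1.verts.ncard := by
    have h1 : C1 ∈ {B : Γ.G.Subgraph | Γ.IsTwoRegular B ∧ Odd B.verts.ncard} := by
      rw [hodd]
      exact Set.mem_insert _ _
    exact h1
  have hC2mem : Γ.IsTwoRegular C2 ∧ Odd C2.verts.ncard := by
    have h1 : C2 ∈ {B : Γ.G.Subgraph | Γ.IsTwoRegular B ∧ Odd B.verts.ncard} := by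
      rw [hodd]
      exact Set.mem_insert_iff.2 (Or.inr rfl)
    exact h1
  set S1 := ((OcycF Γ C1) ×ˢ (MinvF Γ (C1.vertsᶜ))).image
    (fun p : Equiv.Perm V × Equiv.Perm V => p.1 * p.2) with hS1
  set S2 := ((OcycF Γ C2) ×ˢ (MinvF Γ (C2.vertsᶜ))).image
    (fun p : Equiv.Perm V × Equiv.Perm V => p.1 * p.2) with hS2
  have hsub : S1 ∪ S2 ⊆ Finset.univ.filter (fun σ : Equiv.Perm V => Odd σ.support.card) := by
    intro σ hσ
    rw [Finset.mem_filter]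
    refine ⟨Finset.mem_univ _, ?_⟩
    rw [Finset.mem_union] at hσ
    rcases hσ with h | h
    · rw [hS1, Finset.mem_image] at h
      obtain ⟨⟨c, τ⟩, hp, hστ⟩ := h
      rw [Finset.mem_product] at hp
      have hστ' : c * τ = σ := hστ
      rw [← hστ']
      exact hoddsupp_mul Γ C1 hC1mem.2 hp.1 hp.2
    · rw [hS2, Finset.mem_image] at h
      obtain ⟨⟨c, τ⟩, hp, hστ⟩ := h
      rw [Finset.mem_product] at hp
      have hστ' : c * τ = σ := hστ
      rw [← hστ']
      exact hoddsupp_mul Γ C2 hC2mem.2 hp.1 hp.2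
  have hvanish : ∀ σ ∈ Finset.univ.filter (fun σ : Equiv.Perm V => Odd σ.support.card),
      σ ∉ S1 ∪ S2 → fterm Γ σ = 0 := by
    intro σ hσ hnot
    rw [Finset.mem_filter] at hσ
    by_contra hne0
    have hprod : ∏ i, dterm Γ σ i ≠ 0 := by
      intro hp0
      exact hne0 (by rw [fterm, hp0, mul_zero])
    obtain ⟨D, c, τ, hDmem, hcP, hτP, hστ⟩ := classify Γ σ hσ.2 hprod
    have hDin : D ∈ ({C1, C2} : Set (Γ.G.Subgraph)) := by
      rw [← hodd]
      exact hDmem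
    apply hnot
    rw [Finset.mem_union]
    rcases hDin with rfl | hDin
    · left
      rw [hS1, Finset.mem_image]
      exact ⟨(c, τ), Finset.mem_product.2 ⟨mem_OcycF.2 hcP, hτP⟩, hστ.symm⟩
    · right
      rw [Set.mem_singleton_iff] at hDin
      subst hDin
      rw [hS2, Finset.mem_image]
      exact ⟨(c, τ), Finset.mem_product.2 ⟨mem_OcycF.2 hcP, hτP⟩, hστ.symm⟩
  have hdisjS : Disjoint S1 S2 := by
    rw [Finset.disjoint_left]
    intro σ h1 h2
    rw [hS1, Finset.mem_image] at h1
    rw [hS2, Finset.mem_image] at h2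
    obtain ⟨⟨c1', τ1⟩, hp1, hστ1⟩ := h1
    obtain ⟨⟨c2', τ2⟩, hp2, hστ2⟩ := h2
    rw [Finset.mem_product] at hp1 hp2
    have hστ1' : c1' * τ1 = σ := hστ1
    have hστ2' : c2' * τ2 = σ := hστ2
    have d1 := D_determined hC1mem.1.2 (mem_OcycF.1 hp1.1) hp1.2
    have d2 := D_determined hC2mem.1.2 (mem_OcycF.1 hp2.1) hp2.2
    rw [hστ1'] at d1
    rw [hστ2'] at d2
    apply h12
    have hverts : C1.verts = C2.verts := by
      ext x
      rw [d1.1 x, d2.1 x]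
    apply SimpleGraph.Subgraph.ext hverts
    ext x y
    rw [d1.2 x y, d2.2 x y, hverts]
  have hsplit : ∑ σ ∈ Finset.univ.filter (fun σ : Equiv.Perm V => Odd σ.support.card),
      fterm Γ σ = ∑ σ ∈ S1 ∪ S2, fterm Γ σ :=
    (Finset.sum_subset hsub hvanish).symm
  rw [hsplit, Finset.sum_union hdisjS]
  rw [hS1, hS2, D_sum Γ C1 hC1mem.1 hC1mem.2 hc1, D_sum Γ C2 hC2mem.1 hC2mem.2 hc2, hM]
  have hdvd : Γ.sgnProd C1 ∣ -1 := ⟨Γ.sgnProd C2, hsgn.symm⟩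
  have hunit : IsUnit (Γ.sgnProd C1) := isUnit_of_dvd_unit hdvd isUnit_one.neg
  have hsgnZ : Γ.sgnProd C2 = -Γ.sgnProd C1 := by
    rcases Int.isUnit_iff.1 hunit with h | h <;> rw [h] at hsgn ⊢ <;> omega
  rw [hsgnZ]
  push_cast
  rw [map_neg]
  ring

end Main
theorem bicyclic_two_odd_cycles_symmetricSpectrum [Fintype V] [DecidableEq V]
    (Γ : SignedGraph V) (hconn : Γ.G.Connected)
    (hE : Γ.G.edgeSet.ncard = Fintype.card V + 1)
    (C1 C2 : Γ.G.Subgraph) (h12 : C1 ≠ C2)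
    (hc1 : C1.coe.Connected) (hc2 : C2.coe.Connected)
    (hodd : {B : Γ.G.Subgraph | Γ.IsTwoRegular B ∧ Odd B.verts.ncard} = {C1, C2})
    (hM : matchingPolyOn Γ.G C1.vertsᶜ = matchingPolyOn Γ.G C2.vertsᶜ)
    (hsgn : Γ.sgnProd C1 * Γ.sgnProd C2 = -1) :
    Γ.SymmetricSpectrum := by
  apply symmSpec_of_charpoly_eq
  apply charpoly_eq_of_T
  exact T_zero Γ C1 C2 h12 hc1 hc2 hodd hM hsgn

end SignedGraph
end
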